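/- arXiv:1809.01796 — 8 statements merged into one kernel-verified Lean document; each statement's English description precedes it below -/
import Mathlib

section
/- Core-tensor term of the recovery lower bound. There exists an absolute constant c > 0 such that the following holds. Fix an order d ≥ 2, dimensions p_1,…,p_d, ranks r_1,…,r_d with 1 ≤ r_l, sparsity levels s_1,…,s_d with 3 r_l ≤ s_l ≤ p_l for every l, a subset J_s ⊆ {1,…,d} with s_l = p_l for every l ∉ J_s, and σ > 0. Then for every measurable estimator X̂ assigning to each p_1×⋯×p_d tensor Y a p_1×⋯×p_d tensor X̂(Y), there exists a tensor X in the class F_{p,r,s}(J_s) such that the expectation over Z of ‖X̂(X+Z) − X‖_F² is at least c σ² ∏_{l=1}^d r_l. -/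
open MeasureTheory ProbabilityTheory Matrix BigOperators

noncomputable section

/-- Index set of an order-`d` tensor with mode sizes `p`. -/
abbrev TIdx {d : ℕ} (p : Fin d → ℕ) := ∀ l, Fin (p l)

/-- Squared Frobenius norm of a tensor. -/
def tfrobSq {d : ℕ} {p : Fin d → ℕ} (X : TIdx p → ℝ) : ℝ := ∑ i, X i ^ 2

/-- Tucker product `⟦S; U_1, …, U_d⟧`. -/
def tucker {d : ℕ} {p r : Fin d → ℕ} (S : TIdx r → ℝ)
    (U : ∀ l, Matrix (Fin (p l)) (Fin (r l)) ℝ) : TIdx p → ℝ :=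
  fun i => ∑ j : TIdx r, S j * ∏ l, U l (i l) (j l)

/-- A matrix is `s`-row-sparse if at most `s` of its rows are nonzero. -/
def rowSparse {ι κ : Type*} (s : ℕ) (U : Matrix ι κ ℝ) : Prop :=
  Set.ncard {i | U i ≠ 0} ≤ s

/-- The class `F_{p,r,s}(J_s)` of simultaneously sparse and Tucker low-rank tensors. -/
def inClassF {d : ℕ} (p r s : Fin d → ℕ) (Js : Finset (Fin d)) (X : TIdx p → ℝ) : Prop :=
  ∃ (S : TIdx r → ℝ) (U : ∀ l, Matrix (Fin (p l)) (Fin (r l)) ℝ),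
    (∀ l, (U l)ᵀ * U l = 1) ∧ (∀ l, l ∈ Js → rowSparse (s l) (U l)) ∧ X = tucker S U

/-- Law of a tensor with i.i.d. `N(0, σ²)` entries. -/
def gaussianTensor {d : ℕ} (p : Fin d → ℕ) (σ : ℝ) : Measure (TIdx p → ℝ) :=
  Measure.pi fun _ => gaussianReal 0 ⟨σ ^ 2, sq_nonneg σ⟩

/-!
Assouad's hypercube argument. For `ε ∈ {0,1}^{r_1 × ⋯ × r_d}` let `X_ε` be the tensor whose
`r_1 × ⋯ × r_d` corner is `σ ε` and which vanishes elsewhere: it is the Tucker product of that core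
with the coordinate embeddings `Fin r_l ↪ Fin p_l`, which are orthonormal and `r_l`-row-sparse, so
`X_ε` lies in the class. The risk at `X_ε` dominates the sum of the squared errors on the corner
entries. If `ε` and `ε'` differ only at `j`, the two observation laws differ only in one
coordinate, `N(0, σ²)` against `N(σ, σ²)`; integrating out the other coordinates, and using that
both densities are at least `φ_σ(σ)` on `[0, σ]`, any estimate `g` of that entry has `E₀ g² + E_σ (g - σ)² ≥ e^{-1/2} σ² / (2 √(2π))`. Averaging over the cube,
some `ε` has risk at least `e^{-1/2} σ² ∏ r_l / (4 √(2π))`.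
-/

open Real Finset Function
open scoped ENNReal NNReal

section Gaussian

variable {v : ℝ≥0}

lemma gaussianPDFReal_le_of_sq_le {μ μ' x y : ℝ} (h : (x - μ) ^ 2 ≤ (y - μ') ^ 2) :
    gaussianPDFReal μ' v y ≤ gaussianPDFReal μ v x := by
  simp only [gaussianPDFReal_def]
  exact mul_le_mul_of_nonneg_left
    (exp_le_exp.mpr (div_le_div_of_nonneg_right (neg_le_neg h) (by positivity))) (by positivity)

lemma gaussianPDFReal_zero_self {σ : ℝ} (hσ : 0 < σ) (hv : (v : ℝ) = σ ^ 2) :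
    gaussianPDFReal 0 v σ = exp (-(1 / 2)) / (√(2 * π) * σ) := by
  simp only [gaussianPDFReal_def, hv, sub_zero]
  rw [Real.sqrt_mul (by positivity), Real.sqrt_sq hσ.le, neg_div,
    div_mul_cancel_right₀ (by positivity), one_div, div_eq_inv_mul]

lemma lintegral_gaussianReal_const_add (f : ℝ → ℝ≥0∞) (c : ℝ) :
    ∫⁻ t, f (c + t) ∂gaussianReal 0 v = ∫⁻ x, f x ∂gaussianReal c v := by
  have hmap := gaussianReal_map_const_add (μ := 0) (v := v) c
  rw [zero_add] at hmap
  rw [← hmap, ← MeasurableEquiv.coe_addLeft, lintegral_map_equiv]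
  rfl

lemma sq_div_two_le_sq_add_sq (a b x : ℝ) : (b - a) ^ 2 / 2 ≤ (x - a) ^ 2 + (x - b) ^ 2 := by
  nlinarith [sq_nonneg (2 * x - a - b)]

lemma ofReal_le_lintegral_gaussianReal_add_lintegral_gaussianReal (hv : v ≠ 0) {g : ℝ → ℝ}
    (hg : Measurable g) (a b : ℝ) :
    ENNReal.ofReal (|b - a| ^ 3 / 2 * gaussianPDFReal 0 v |b - a|) ≤
      ∫⁻ x, ENNReal.ofReal ((g x - a) ^ 2) ∂gaussianReal a v +
        ∫⁻ x, ENNReal.ofReal ((g x - b) ^ 2) ∂gaussianReal b v := by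
  set m := gaussianPDFReal 0 v |b - a|
  have hm : 0 ≤ m := gaussianPDFReal_nonneg _ _ _
  have hga : Measurable fun x => ENNReal.ofReal ((g x - a) ^ 2) := by fun_prop
  have hgb : Measurable fun x => ENNReal.ofReal ((g x - b) ^ 2) := by fun_prop
  have hpdf : ∀ c x, |x - c| ≤ |b - a| → ENNReal.ofReal m ≤ gaussianPDF c v x := fun c x h =>
    ENNReal.ofReal_le_ofReal <| gaussianPDFReal_le_of_sq_le <| by
      rwa [sub_zero, sq_le_sq, abs_abs]
  rw [gaussianReal_of_var_ne_zero _ hv, gaussianReal_of_var_ne_zero _ hv,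
    lintegral_withDensity_eq_lintegral_mul _ (measurable_gaussianPDF _ _) hga,
    lintegral_withDensity_eq_lintegral_mul _ (measurable_gaussianPDF _ _) hgb,
    ← lintegral_add_left ((measurable_gaussianPDF _ _).mul hga)]
  calc ENNReal.ofReal (|b - a| ^ 3 / 2 * m)
      = ∫⁻ _ in Set.uIcc a b, ENNReal.ofReal (m * ((b - a) ^ 2 / 2)) := by
        rw [setLIntegral_const, Real.volume_interval, ← ENNReal.ofReal_mul (by positivity)]
        congr 1
        rw [← sq_abs (b - a)]
        ring
    _ ≤ ∫⁻ x in Set.uIcc a b, gaussianPDF a v x * ENNReal.ofReal ((g x - a) ^ 2) +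
          gaussianPDF b v x * ENNReal.ofReal ((g x - b) ^ 2) := by
        refine setLIntegral_mono (by fun_prop) fun x hx => ?_
        calc ENNReal.ofReal (m * ((b - a) ^ 2 / 2))
            ≤ ENNReal.ofReal m * ENNReal.ofReal ((g x - a) ^ 2) +
                ENNReal.ofReal m * ENNReal.ofReal ((g x - b) ^ 2) := by
              rw [← mul_add, ← ENNReal.ofReal_add (sq_nonneg _) (sq_nonneg _),
                ← ENNReal.ofReal_mul hm]
              gcongr
              exact sq_div_two_le_sq_add_sq a b (g x)
          _ ≤ _ := by
              gcongr
              · exact hpdf a x (Set.abs_sub_left_of_mem_uIcc hx)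
              · exact hpdf b x (by rw [abs_sub_comm]; exact Set.abs_sub_right_of_mem_uIcc hx)
    _ ≤ _ := setLIntegral_le_lintegral _ _

lemma ofReal_le_lintegral_gaussianReal_const_add (hv : v ≠ 0) {g : ℝ → ℝ}
    (hg : Measurable g) (a b : ℝ) :
    ENNReal.ofReal (|b - a| ^ 3 / 2 * gaussianPDFReal 0 v |b - a|) ≤
      ∫⁻ t, ENNReal.ofReal ((g (a + t) - a) ^ 2) ∂gaussianReal 0 v +
        ∫⁻ t, ENNReal.ofReal ((g (b + t) - b) ^ 2) ∂gaussianReal 0 v := by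
  rw [lintegral_gaussianReal_const_add (fun x => ENNReal.ofReal ((g x - a) ^ 2)),
    lintegral_gaussianReal_const_add (fun x => ENNReal.ofReal ((g x - b) ^ 2))]
  exact ofReal_le_lintegral_gaussianReal_add_lintegral_gaussianReal hv hg a b

end Gaussian

section Product

variable {δ : Type*} [Fintype δ] [DecidableEq δ]

lemma le_lintegral_pi_of_forall_le_lintegral_update {X : δ → Type*}
    [∀ k, MeasurableSpace (X k)] {μ : ∀ k, Measure (X k)} [∀ k, IsProbabilityMeasure (μ k)]
    {F : (∀ k, X k) → ℝ≥0∞} (hF : Measurable F) (i : δ) {B : ℝ≥0∞}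
    (h : ∀ w, B ≤ ∫⁻ t, F (update w i t) ∂μ i) : B ≤ ∫⁻ w, F w ∂Measure.pi μ := by
  have : ∀ k, Nonempty (X k) := fun k => nonempty_of_isProbabilityMeasure (μ k)
  let w₀ : ∀ k, X k := fun _ => Classical.ofNonempty
  rw [lintegral_eq_lmarginal_univ w₀, lmarginal_erase' F hF (mem_univ i)]
  calc B = (∫⋯∫⁻_(univ.erase i), fun _ => B ∂μ) w₀ := by simp [lmarginal]
    _ ≤ _ := lmarginal_mono h w₀

lemma ofReal_le_lintegral_gaussian_pi_add {v : ℝ≥0} (hv : v ≠ 0) {G : (δ → ℝ) → ℝ}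
    (hG : Measurable G) {x y : δ → ℝ} {i : δ} (hxy : ∀ k ≠ i, x k = y k) :
    ENNReal.ofReal (|y i - x i| ^ 3 / 2 * gaussianPDFReal 0 v |y i - x i|) ≤
      ∫⁻ Z, ENNReal.ofReal ((G (x + Z) - x i) ^ 2) ∂Measure.pi (fun _ => gaussianReal 0 v) +
        ∫⁻ Z, ENNReal.ofReal ((G (y + Z) - y i) ^ 2) ∂Measure.pi (fun _ => gaussianReal 0 v) := by
  rw [← lintegral_add_left (by fun_prop)]
  refine le_lintegral_pi_of_forall_le_lintegral_update (by fun_prop) i fun w => ?_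
  have hshift : ∀ z : δ → ℝ, (∀ k ≠ i, z k = x k) →
      ∀ t, z + update w i t = update (x + w) i (z i + t) := by
    intro z hz t
    funext k
    by_cases hk : k = i
    · subst hk; simp
    · simp [hk, hz k hk]
  simp only [hshift x (fun _ _ => rfl), hshift y (fun k hk => (hxy k hk).symm)]
  rw [lintegral_add_left (by fun_prop)]
  exact ofReal_le_lintegral_gaussianReal_const_add hv (hG.comp (measurable_update _)) (x i) (y i)

end Product

lemma exists_card_mul_le_sum_of_forall_le_add_flip {ι : Type*} [Fintype ι] [DecidableEq ι]
    (T : (ι → Bool) → ι → ℝ≥0∞) {b : ℝ≥0∞}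
    (h : ∀ ε j, 2 * b ≤ T ε j + T (update ε j !ε j) j) :
    ∃ ε, Fintype.card ι * b ≤ ∑ j, T ε j := by
  have hflip : ∀ j, ∑ ε, T (update ε j !ε j) j = ∑ ε, T ε j := fun j =>
    Equiv.sum_comp (Involutive.toPerm (fun ε : ι → Bool => update ε j !ε j) fun ε => by simp)
      (T · j)
  have hsum : ∑ _ε : ι → Bool, 2 * (Fintype.card ι * b) ≤ ∑ ε, 2 * ∑ j, T ε j :=
    calc ∑ _ε : ι → Bool, 2 * (Fintype.card ι * b) = ∑ j : ι, ∑ _ε : ι → Bool, 2 * b := by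
          simp only [sum_const, card_univ, nsmul_eq_mul]; ring
      _ ≤ ∑ j, ∑ ε, (T ε j + T (update ε j !ε j) j) := by gcongr with j _ ε; exact h ε j
      _ = ∑ ε, 2 * ∑ j, T ε j := by
          simp only [sum_add_distrib, hflip, ← two_mul, ← mul_sum]
          rw [sum_comm]
  obtain ⟨ε, -, hε⟩ := ENNReal.exists_le_of_sum_le univ_nonempty hsum
  exact ⟨ε, (ENNReal.mul_le_mul_iff_right two_ne_zero ENNReal.ofNat_ne_top).mp hε⟩

lemma sum_lintegral_sq_comp_le_lintegral_sum_sq {Ω ι κ : Type*} [MeasurableSpace Ω]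
    {μ : Measure Ω} [Fintype ι] [Fintype κ] {e : κ → ι} (he : Injective e)
    {F : Ω → ι → ℝ} (hF : Measurable F) :
    ∑ k, ∫⁻ ω, ENNReal.ofReal (F ω (e k) ^ 2) ∂μ ≤ ∫⁻ ω, ENNReal.ofReal (∑ i, F ω i ^ 2) ∂μ := by
  classical
  simp only [ENNReal.ofReal_sum_of_nonneg fun _ _ => sq_nonneg _]
  rw [lintegral_finsetSum' _ fun i _ => by fun_prop,
    ← sum_image (f := fun i => ∫⁻ ω, ENNReal.ofReal (F ω i ^ 2) ∂μ) he.injOn]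
  exact sum_le_sum_of_subset (subset_univ _)

section Corner

variable {ι κ : Type*} [DecidableEq ι] {e : κ → ι}

lemma transpose_one_submatrix_mul_self {R : Type*} [NonAssocSemiring R] [Fintype ι] [Fintype κ]
    [DecidableEq κ] (he : Injective e) :
    ((1 : Matrix ι ι R).submatrix id e)ᵀ * (1 : Matrix ι ι R).submatrix id e = 1 := by
  rw [transpose_submatrix, transpose_one, ← submatrix_mul _ _ _ _ _ bijective_id, one_mul,
    submatrix_one _ he]

lemma rowSparse_one_submatrix [Finite κ] (he : Injective e) {s : ℕ} (hs : Nat.card κ ≤ s) :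
    rowSparse s ((1 : Matrix ι ι ℝ).submatrix id e) := by
  have hrows : {i | (1 : Matrix ι ι ℝ).submatrix id e i ≠ 0} ⊆ Set.range e := by
    intro i hi
    by_contra hie
    refine hi (funext fun k => ?_)
    simp only [submatrix_apply, id, one_apply]
    exact if_neg fun h => hie ⟨k, h.symm⟩
  calc _ ≤ (Set.range e).ncard := Set.ncard_le_ncard hrows (Set.finite_range e)
    _ = Nat.card κ := Set.ncard_range_of_injective he
    _ ≤ s := hs

end Corner

def coordRisk {d : ℕ} {p : Fin d → ℕ} (Xhat : (TIdx p → ℝ) → TIdx p → ℝ) (σ : ℝ)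
    (X : TIdx p → ℝ) (i : TIdx p) : ℝ≥0∞ :=
  ∫⁻ Z, ENNReal.ofReal ((Xhat (X + Z) i - X i) ^ 2) ∂gaussianTensor p σ

def cubeTensor {d : ℕ} {p r : Fin d → ℕ} (e : ∀ l, Fin (r l) → Fin (p l))
    (σ : ℝ) (ε : TIdx r → Bool) : TIdx p → ℝ :=
  tucker (fun j => if ε j then σ else 0) fun l => (1 : Matrix _ _ ℝ).submatrix id (e l)

section Tucker

variable {d : ℕ} {p r : Fin d → ℕ} {e : ∀ l, Fin (r l) → Fin (p l)}

lemma tucker_one_submatrix_apply (S : TIdx r → ℝ) (i : TIdx p) :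
    tucker S (fun l => (1 : Matrix _ _ ℝ).submatrix id (e l)) i =
      ∑ j, if i = Pi.map e j then S j else 0 := by
  refine sum_congr rfl fun j _ => ?_
  simp only [submatrix_apply, id, one_apply, prod_boole, mem_univ, forall_const, mul_ite,
    mul_one, mul_zero, funext_iff, Pi.map_apply]

lemma tucker_one_submatrix_apply_piMap (he : ∀ l, Injective (e l)) (S : TIdx r → ℝ)
    (j : TIdx r) :
    tucker S (fun l => (1 : Matrix _ _ ℝ).submatrix id (e l)) (Pi.map e j) = S j := by
  simp [tucker_one_submatrix_apply, (Injective.piMap he).eq_iff]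

lemma tucker_one_submatrix_apply_eq_of_ne {S S' : TIdx r → ℝ} {j : TIdx r}
    (hS : ∀ j' ≠ j, S j' = S' j') {i : TIdx p} (hi : i ≠ Pi.map e j) :
    tucker S (fun l => (1 : Matrix _ _ ℝ).submatrix id (e l)) i =
      tucker S' (fun l => (1 : Matrix _ _ ℝ).submatrix id (e l)) i := by
  simp only [tucker_one_submatrix_apply]
  refine sum_congr rfl fun j' _ => ?_
  by_cases hj : j' = j
  · subst hj; simp [hi]
  · rw [hS j' hj]

lemma cubeTensor_mem_inClassF (he : ∀ l, Injective (e l)) {s : Fin d → ℕ} {Js : Finset (Fin d)}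
    (hrs : ∀ l ∈ Js, r l ≤ s l) (σ : ℝ) (ε : TIdx r → Bool) :
    inClassF p r s Js (cubeTensor e σ ε) :=
  ⟨_, _, fun l => transpose_one_submatrix_mul_self (he l),
    fun l hl => rowSparse_one_submatrix (he l) ((Nat.card_fin _).trans_le (hrs l hl)), rfl⟩

lemma abs_cubeTensor_update_not_sub (he : ∀ l, Injective (e l)) (σ : ℝ) (ε : TIdx r → Bool)
    (j : TIdx r) :
    |cubeTensor e σ (update ε j !ε j) (Pi.map e j) - cubeTensor e σ ε (Pi.map e j)| = |σ| := by
  simp only [cubeTensor, tucker_one_submatrix_apply_piMap he, update_self]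
  cases ε j <;> simp

lemma cubeTensor_update_not_apply_of_ne (σ : ℝ) (ε : TIdx r → Bool) {j : TIdx r} {i : TIdx p}
    (hi : i ≠ Pi.map e j) : cubeTensor e σ ε i = cubeTensor e σ (update ε j !ε j) i :=
  tucker_one_submatrix_apply_eq_of_ne (fun j' hj' => by rw [update_of_ne hj']) hi

lemma two_mul_ofReal_le_coordRisk_cubeTensor_add {σ : ℝ} (hσ : 0 < σ) (he : ∀ l, Injective (e l))
    {Xhat : (TIdx p → ℝ) → TIdx p → ℝ} (hXhat : Measurable Xhat) (ε : TIdx r → Bool)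
    (j : TIdx r) :
    2 * ENNReal.ofReal (exp (-(1 / 2)) / (4 * √(2 * π)) * σ ^ 2) ≤
      coordRisk Xhat σ (cubeTensor e σ ε) (Pi.map e j) +
        coordRisk Xhat σ (cubeTensor e σ (update ε j !ε j)) (Pi.map e j) := by
  set v : ℝ≥0 := ⟨σ ^ 2, sq_nonneg σ⟩
  have hv : v ≠ 0 := fun h => pow_ne_zero 2 hσ.ne' (congrArg NNReal.toReal h)
  calc 2 * ENNReal.ofReal (exp (-(1 / 2)) / (4 * √(2 * π)) * σ ^ 2)
      = ENNReal.ofReal (|σ| ^ 3 / 2 * gaussianPDFReal 0 v |σ|) := by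
        rw [abs_of_pos hσ, gaussianPDFReal_zero_self hσ rfl, ← ENNReal.ofReal_ofNat 2,
          ← ENNReal.ofReal_mul zero_le_two]
        congr 1
        field_simp
        ring
    _ ≤ _ := by
        rw [← abs_cubeTensor_update_not_sub he σ ε j]
        exact ofReal_le_lintegral_gaussian_pi_add hv ((measurable_pi_apply _).comp hXhat)
          fun i => cubeTensor_update_not_apply_of_ne σ ε

end Tucker

/-- Core-tensor term of the minimax recovery lower bound
(core-tensor term of the recovery lower bound). -/
theorem sparse_tensor_recovery_core_term_lower_bound :
    ∃ c : ℝ, 0 < c ∧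
      ∀ (d : ℕ), 2 ≤ d →
      ∀ (p r s : Fin d → ℕ) (Js : Finset (Fin d)) (σ : ℝ),
        (∀ l, 1 ≤ r l) →
        (∀ l, 3 * r l ≤ s l) →
        (∀ l, s l ≤ p l) →
        (∀ l, l ∉ Js → s l = p l) →
        0 < σ →
        ∀ Xhat : (TIdx p → ℝ) → (TIdx p → ℝ),
          Measurable Xhat →
          ∃ X : TIdx p → ℝ, inClassF p r s Js X ∧
            ENNReal.ofReal (c * σ ^ 2 * ∏ l, (r l : ℝ)) ≤
              ∫⁻ Z, ENNReal.ofReal (tfrobSq (fun i => Xhat (fun i' => X i' + Z i') i - X i))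
                ∂(gaussianTensor p σ) := by
  set c := exp (-(1 / 2)) / (4 * √(2 * π))
  refine ⟨c, by positivity, fun d _ p r s Js σ _ h3rs hsp _ hσ Xhat hXhat => ?_⟩
  set e : ∀ l, Fin (r l) → Fin (p l) := fun l => Fin.castLE (by linarith [h3rs l, hsp l])
  have he : ∀ l, Injective (e l) := fun l => Fin.castLE_injective _
  obtain ⟨ε, hε⟩ := exists_card_mul_le_sum_of_forall_le_add_flip
    (fun ε j => coordRisk Xhat σ (cubeTensor e σ ε) (Pi.map e j))
    (two_mul_ofReal_le_coordRisk_cubeTensor_add hσ he hXhat)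
  refine ⟨cubeTensor e σ ε, cubeTensor_mem_inClassF he (fun l _ => by linarith [h3rs l]) σ ε, ?_⟩
  calc ENNReal.ofReal (c * σ ^ 2 * ∏ l, (r l : ℝ))
      = Fintype.card (TIdx r) * ENNReal.ofReal (c * σ ^ 2) := by
        rw [mul_comm, ENNReal.ofReal_mul (by positivity),
          ENNReal.ofReal_prod_of_nonneg fun _ _ => Nat.cast_nonneg _]
        simp [Fintype.card_pi]
    _ ≤ ∑ j, coordRisk Xhat σ (cubeTensor e σ ε) (Pi.map e j) := hε
    _ ≤ _ := sum_lintegral_sq_comp_le_lintegral_sum_sq (Injective.piMap he)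
        (F := fun Z i => Xhat (cubeTensor e σ ε + Z) i - cubeTensor e σ ε i) (by fun_prop)

end
end

section
/- Loading-values term of the recovery lower bound. There exists an absolute constant c > 0 such that the following holds. Fix an order d ≥ 2, an index k ∈ {1,…,d}, dimensions p_1,…,p_d, ranks r_1,…,r_d with 1 ≤ r_l and r_l ≤ ∏_{m≠l} r_m for every l, sparsity levels s_1,…,s_d with 3 r_l ≤ s_l ≤ p_l for every l, a subset J_s ⊆ {1,…,d} with s_l = p_l for every l ∉ J_s, and σ > 0. Then for every measurable estimator X̂ assigning to each p_1×⋯×p_d tensor Y a p_1×⋯×p_d tensor X̂(Y), there exists a tensor X in the class F_{p,r,s}(J_s) such that the expectation over Z of ‖X̂(X+Z) − X‖_F² is at least c σ² s_k r_k. -/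
open MeasureTheory ProbabilityTheory Matrix BigOperators

noncomputable section

lemma sum_fin_restrict {N n : ℕ} (hn : n ≤ N) (f : Fin N → ℝ)
    (hf : ∀ a : Fin N, n ≤ (a : ℕ) → f a = 0) :
    ∑ a, f a = ∑ t : Fin n, f (Fin.castLE hn t) := by
  classical
  rw [← Finset.sum_image (s := Finset.univ) (g := fun t : Fin n => Fin.castLE hn t) (f := f)
      (fun x _ y _ h => Fin.castLE_injective hn h)]
  refine (Finset.sum_subset (Finset.subset_univ _) ?_).symm
  intro a _ ha
  refine hf a ?_
  by_contra hcon
  push_neg at hcon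
  exact ha (Finset.mem_image.2 ⟨⟨(a : ℕ), hcon⟩, Finset.mem_univ _, by ext; simp⟩)

lemma exists_orthonormal_factor (N n q : ℕ) (hq : q ≤ n) (hn : n ≤ N)
    (B : Matrix (Fin N) (Fin q) ℝ) (hB : ∀ a : Fin N, n ≤ (a : ℕ) → ∀ j, B a j = 0) :
    ∃ (U : Matrix (Fin N) (Fin q) ℝ) (M : Matrix (Fin q) (Fin q) ℝ),
      Uᵀ * U = 1 ∧ (∀ a : Fin N, n ≤ (a : ℕ) → ∀ j, U a j = 0) ∧ B = U * M := by
  classical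
  set b : Fin q → EuclideanSpace ℝ (Fin n) :=
    fun j => WithLp.toLp 2 (fun t => B (Fin.castLE hn t) j : Fin n → ℝ) with hb
  set V : Submodule ℝ (EuclideanSpace ℝ (Fin n)) := Submodule.span ℝ (Set.range b) with hV
  have hmq : Module.finrank ℝ V ≤ q := by
    refine (finrank_span_le_card (Set.range b)).trans ?_
    rw [Set.toFinset_card]
    exact (Fintype.card_range_le b).trans (by simp)
  have hmn : Module.finrank ℝ V ≤ n := by
    have h1 := Submodule.finrank_le V
    rwa [finrank_euclideanSpace_fin] at h1
  set m := Module.finrank ℝ V with hm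
  -- orthonormal basis of V, as a family in E
  set w : Fin m → EuclideanSpace ℝ (Fin n) :=
    fun t => ((stdOrthonormalBasis ℝ V) t : EuclideanSpace ℝ (Fin n)) with hw
  have hw_on : Orthonormal ℝ w := by
    have h := (stdOrthonormalBasis ℝ V).orthonormal
    rw [orthonormal_iff_ite] at h ⊢
    intro s t
    have := h s t
    simpa [hw, Submodule.coe_inner] using this
  -- extend to an orthonormal basis of E
  set v' : Fin n → EuclideanSpace ℝ (Fin n) :=
    fun t => if h : (t : ℕ) < m then w ⟨t, h⟩ else 0 with hv'
  have hv'_on : Orthonormal ℝ (({t : Fin n | (t : ℕ) < m} : Set (Fin n)).restrict v') := by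
    have : (({t : Fin n | (t : ℕ) < m} : Set (Fin n)).restrict v')
        = w ∘ (fun t : {t : Fin n // (t : ℕ) < m} => (⟨(t : Fin n), t.2⟩ : Fin m)) := by
      funext t
      have ht : ((t : Fin n) : ℕ) < m := t.2
      simp only [Set.restrict_apply, Function.comp_apply]
      exact dif_pos ht
    rw [this]
    exact hw_on.comp _ (fun a b hab => by
      have h2 := congrArg Fin.val hab
      exact Subtype.ext (Fin.ext (by simpa using h2)))
  obtain ⟨bE, hbE⟩ := hv'_on.exists_orthonormalBasis_extension_of_card_eq
    (by simp [finrank_euclideanSpace_fin])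
  set u : Fin q → EuclideanSpace ℝ (Fin n) := fun j => bE (Fin.castLE hq j) with hu
  have hu_on : Orthonormal ℝ u := bE.orthonormal.comp _ (Fin.castLE_injective hq)
  -- inner products of bE with elements of V vanish beyond m
  have hvanish : ∀ (t : Fin n), m ≤ (t : ℕ) → ∀ j, (inner ℝ (bE t) (b j) : ℝ) = 0 := by
    intro t ht j
    have hbjV : b j ∈ V := Submodule.subset_span (Set.mem_range_self j)
    have hrepr := (stdOrthonormalBasis ℝ V).sum_repr (⟨b j, hbjV⟩ : V)
    have : b j = ∑ t' : Fin m, ((stdOrthonormalBasis ℝ V).repr ⟨b j, hbjV⟩ t') • w t' := by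
      have := congrArg (Submodule.subtype V) hrepr
      simpa [hw, map_sum] using this.symm
    rw [this, inner_sum]
    refine Finset.sum_eq_zero fun t' _ => ?_
    have hwt' : w t' = bE ⟨(t' : ℕ), lt_of_lt_of_le t'.2 hmn⟩ := by
      have := hbE ⟨(t' : ℕ), lt_of_lt_of_le t'.2 hmn⟩ (by simpa using t'.2)
      rw [this, hv']
      simp [t'.2]
    rw [hwt', real_inner_smul_right]
    have hne : t ≠ ⟨(t' : ℕ), lt_of_lt_of_le t'.2 hmn⟩ := by
      intro hcontra
      have : (t : ℕ) = (t' : ℕ) := congrArg Fin.val hcontra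
      omega
    have := bE.orthonormal
    rw [orthonormal_iff_ite] at this
    rw [this t _]
    simp [hne]
  -- expansion of b j in terms of u
  have hexp : ∀ j, b j = ∑ j' : Fin q, (inner ℝ (u j') (b j) : ℝ) • u j' := by
    intro j
    have hrepr := bE.sum_repr' (b j)
    have hzero : ∀ t : Fin n, t ∉ Finset.image (Fin.castLE hq) Finset.univ →
        (inner ℝ (bE t) (b j) : ℝ) • bE t = 0 := by
      intro t ht
      have htq : q ≤ (t : ℕ) := by
        by_contra hcon
        push_neg at hcon
        exact ht (Finset.mem_image.2 ⟨⟨(t : ℕ), hcon⟩, Finset.mem_univ _, by ext; simp⟩)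
      rw [hvanish t (le_trans hmq htq) j]
      simp
    calc b j = ∑ t : Fin n, (inner ℝ (bE t) (b j) : ℝ) • bE t := hrepr.symm
      _ = ∑ t ∈ Finset.image (Fin.castLE hq) Finset.univ, (inner ℝ (bE t) (b j) : ℝ) • bE t :=
          (Finset.sum_subset (Finset.subset_univ _) (fun t _ ht => hzero t ht)).symm
      _ = ∑ j' : Fin q, (inner ℝ (bE (Fin.castLE hq j')) (b j) : ℝ) • bE (Fin.castLE hq j') :=
          Finset.sum_image (fun x _ y _ hxy => Fin.castLE_injective hq hxy)
      _ = ∑ j' : Fin q, (inner ℝ (u j') (b j) : ℝ) • u j' := rfl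
  -- define U and M
  refine ⟨Matrix.of (fun a j => if h : (a : ℕ) < n then u j ⟨(a : ℕ), h⟩ else 0),
      Matrix.of (fun j' j => (inner ℝ (u j') (b j) : ℝ)), ?_, ?_, ?_⟩
  · -- orthonormal columns
    ext j j'
    simp only [Matrix.mul_apply, Matrix.transpose_apply, Matrix.of_apply]
    have hre : ∑ a : Fin N, (if h : (a : ℕ) < n then u j ⟨(a : ℕ), h⟩ else 0) *
        (if h : (a : ℕ) < n then u j' ⟨(a : ℕ), h⟩ else 0)
        = ∑ t : Fin n, u j t * u j' t := by
      rw [sum_fin_restrict hn _ (fun a ha => by rw [dif_neg (by omega)]; ring)]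
      refine Finset.sum_congr rfl fun t _ => ?_
      have hlt : ((Fin.castLE hn t : Fin N) : ℕ) < n := by simp
      rw [dif_pos hlt, dif_pos hlt]
      have : (⟨((Fin.castLE hn t : Fin N) : ℕ), hlt⟩ : Fin n) = t := by ext; simp
      rw [this]
    rw [hre]
    have : (inner ℝ (u j) (u j') : ℝ) = ∑ t : Fin n, u j t * u j' t := by
      rw [PiLp.inner_apply]
      simp [RCLike.inner_apply]
      exact Finset.sum_congr rfl fun _ _ => mul_comm _ _
    rw [← this]
    have hon := hu_on
    rw [orthonormal_iff_ite] at hon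
    rw [hon j j', Matrix.one_apply]
  · intro a ha j
    exact dif_neg (by omega)
  · -- B = U * M
    ext a j
    simp only [Matrix.mul_apply, Matrix.of_apply]
    by_cases h : (a : ℕ) < n
    · have hBa : B a j = b j ⟨(a : ℕ), h⟩ := by
        have hc : Fin.castLE hn (⟨(a : ℕ), h⟩ : Fin n) = a := by ext; simp
        simp only [hb]
        rw [hc]
      rw [hBa]
      conv_lhs => rw [hexp j]
      rw [WithLp.ofLp_sum, Finset.sum_apply]
      refine Finset.sum_congr rfl fun j' _ => ?_
      rw [dif_pos h, PiLp.smul_apply, smul_eq_mul, mul_comm]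
    · rw [hB a (by omega) j]
      rw [Finset.sum_eq_zero]
      intro j' _
      rw [dif_neg h]
      ring

/-- Row-sparsity from support in an initial segment. -/
lemma rowSparse_of_initial {P R s : ℕ} (hs : s ≤ P) (U : Matrix (Fin P) (Fin R) ℝ)
    (h : ∀ a : Fin P, s ≤ (a : ℕ) → ∀ j, U a j = 0) : rowSparse s U := by
  classical
  have hsub : {i | U i ≠ 0} ⊆ ((Finset.image (Fin.castLE hs) Finset.univ : Finset (Fin P)) :
      Set (Fin P)) := by
    intro a ha
    have hlt : (a : ℕ) < s := by
      by_contra hcon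
      push_neg at hcon
      exact ha (funext fun j => h a hcon j)
    exact Finset.mem_coe.2 (Finset.mem_image.2 ⟨⟨(a : ℕ), hlt⟩, Finset.mem_univ _, by ext; simp⟩)
  calc Set.ncard {i | U i ≠ 0}
      ≤ Set.ncard ((Finset.image (Fin.castLE hs) Finset.univ : Finset (Fin P)) : Set (Fin P)) :=
        Set.ncard_le_ncard hsub (Set.toFinite _)
    _ = (Finset.image (Fin.castLE hs) Finset.univ).card := Set.ncard_coe_finset _
    _ = s := by
        rw [Finset.card_image_of_injective _ (Fin.castLE_injective hs)]
        simp

lemma exists_support_finset {d : ℕ} (k : Fin d) (p r s : Fin d → ℕ) (Js : Finset (Fin d))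
    (hrprod : r k ≤ ∏ m ∈ Finset.univ.erase k, r m)
    (hrs : ∀ l, 3 * r l ≤ s l) (hsp : ∀ l, s l ≤ p l) :
    ∃ T : Finset (TIdx p), T.card = s k * r k ∧
      ∀ X : TIdx p → ℝ, (∀ i, i ∉ T → X i = 0) → inClassF p r s Js X := by
  classical
  have hrs' : ∀ l, r l ≤ s l := fun l => le_trans (by omega) (hrs l)
  have hrp : ∀ l, r l ≤ p l := fun l => le_trans (hrs' l) (hsp l)
  -- the set C of retained columns
  have hcard : r k ≤ Fintype.card (∀ m : {m : Fin d // m ≠ k}, Fin (r m)) := by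
    rw [Fintype.card_pi]
    refine hrprod.trans (le_of_eq ?_)
    rw [← Finset.prod_coe_sort (Finset.univ.erase k) (fun m => r m)]
    refine Fintype.prod_equiv (Equiv.subtypeEquivRight (fun m => by simp [Finset.mem_erase]))
      _ _ (fun x => ?_)
    simp [Equiv.subtypeEquivRight_apply]
    convert (Fintype.card_fin (r x)).symm
    exact Fintype.card_congr' rfl
  obtain ⟨C, -, hC⟩ := Finset.exists_subset_card_eq
    (by simpa using hcard : r k ≤ (Finset.univ : Finset (∀ m : {m : Fin d // m ≠ k}, Fin (r m))).card)
  set e : Fin (r k) ≃ C := (Finset.equivFinOfCardEq hC).symm with he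
  -- index maps
  set Φ' : Fin (p k) × Fin (r k) → TIdx p := fun aj l =>
    if h : l = k then Fin.cast (congrArg p h.symm) aj.1
    else Fin.castLE (hrp l) ((e aj.2 : ∀ m : {m : Fin d // m ≠ k}, Fin (r m)) ⟨l, h⟩) with hΦ'
  have hΦ'k : ∀ aj, ((Φ' aj) k : ℕ) = (aj.1 : ℕ) := by
    intro aj
    simp only [hΦ', dif_pos rfl]
    simp
  have hΦ'ne : ∀ aj (l : Fin d) (h : l ≠ k),
      ((Φ' aj) l : ℕ) = (((e aj.2 : ∀ m : {m : Fin d // m ≠ k}, Fin (r m)) ⟨l, h⟩ : Fin (r l)) : ℕ) := by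
    intro aj l h
    simp only [hΦ', dif_neg h]
    simp
  set Φ : Fin (s k) × Fin (r k) → TIdx p := fun aj => Φ' (Fin.castLE (hsp k) aj.1, aj.2) with hΦ
  have hΦinj : Function.Injective Φ := by
    intro x y hxy
    have h1 : (x.1 : ℕ) = (y.1 : ℕ) := by
      have := congrArg (fun i : TIdx p => ((i k) : ℕ)) hxy
      simpa [hΦ, hΦ'k] using this
    have h2 : x.2 = y.2 := by
      apply e.injective
      apply Subtype.ext
      funext m
      apply Fin.ext
      have := congrArg (fun i : TIdx p => ((i (m : Fin d)) : ℕ)) hxy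
      simpa [hΦ, hΦ'ne _ _ m.2] using this
    exact Prod.ext (Fin.ext h1) h2
  refine ⟨Finset.image Φ Finset.univ, ?_, ?_⟩
  · rw [Finset.card_image_of_injective _ hΦinj]
    simp
  intro X hX
  -- the matrix B of values
  set B : Matrix (Fin (p k)) (Fin (r k)) ℝ := fun a j => X (Φ' (a, j)) with hBdef
  have hB0 : ∀ a : Fin (p k), s k ≤ (a : ℕ) → ∀ j, B a j = 0 := by
    intro a ha j
    refine hX _ (fun hmem => ?_)
    obtain ⟨x, -, hx⟩ := Finset.mem_image.1 hmem
    have := congrArg (fun i : TIdx p => ((i k) : ℕ)) hx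
    simp only [hΦ, hΦ'k] at this
    have hlt : ((Fin.castLE (hsp k) x.1 : Fin (p k)) : ℕ) < s k := by simp
    omega
  obtain ⟨U, M, hUtU, hUsupp, hBUM⟩ :=
    exists_orthonormal_factor (p k) (s k) (r k) (hrs' k) (hsp k) B hB0
  -- the factor matrices
  set Ufam : ∀ l, Matrix (Fin (p l)) (Fin (r l)) ℝ := fun l =>
    if h : l = k then
      (fun a j => U (Fin.cast (congrArg p h) a) (Fin.cast (congrArg r h) j))
    else Matrix.of (fun a j => if (a : ℕ) = (j : ℕ) then 1 else 0) with hUfam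
  have hUfamk : Ufam k = U := by
    exact dif_pos rfl
  have hUfamne : ∀ l, l ≠ k → Ufam l =
      Matrix.of fun (a : Fin (p l)) (j : Fin (r l)) => if (a : ℕ) = (j : ℕ) then (1 : ℝ) else 0 := by
    intro l h
    exact dif_neg h
  -- core tensor
  set S : TIdx r → ℝ := fun jj =>
    if h : (fun m : {m : Fin d // m ≠ k} => jj (m : Fin d)) ∈ C then
      M (jj k) (e.symm ⟨_, h⟩) else 0 with hS
  refine ⟨S, Ufam, ?_, ?_, ?_⟩
  · intro l
    by_cases h : l = k
    · subst h
      rw [hUfamk]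
      exact hUtU
    · rw [hUfamne l h]
      ext j j'
      simp only [Matrix.mul_apply, Matrix.transpose_apply, Matrix.of_apply]
      have hcast : ∀ (a : Fin (p l)) (jq : Fin (r l)),
          ((a : ℕ) = (jq : ℕ)) ↔ a = Fin.castLE (hrp l) jq := by
        intro a jq
        constructor
        · intro hh; ext; simpa using hh
        · intro hh; subst hh; simp
      simp only [hcast]
      have hsplit : ∀ a : Fin (p l),
          ((if a = Fin.castLE (hrp l) j then (1:ℝ) else 0) *
            (if a = Fin.castLE (hrp l) j' then (1:ℝ) else 0))
          = if a = Fin.castLE (hrp l) j then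
              (if a = Fin.castLE (hrp l) j' then (1:ℝ) else 0) else 0 := by
        intro a
        by_cases hh : a = Fin.castLE (hrp l) j <;> simp [hh]
      simp only [hsplit]
      rw [Finset.sum_ite_eq' Finset.univ (Fin.castLE (hrp l) j)]
      simp only [Finset.mem_univ, if_true]
      rw [Matrix.one_apply]
      by_cases hjj : j = j'
      · simp [hjj]
      · rw [if_neg (fun hcon => hjj (Fin.castLE_injective _ hcon)), if_neg hjj]
  · intro l _
    by_cases h : l = k
    · rw [h, hUfamk]
      exact rowSparse_of_initial (hsp k) U hUsupp
    · rw [hUfamne l h]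
      refine rowSparse_of_initial (hsp l) _ ?_
      intro a ha j
      have hj : (j : ℕ) < r l := j.isLt
      have := hrs' l
      rw [Matrix.of_apply, if_neg (by omega)]
  · funext i
    have key : (tucker S Ufam) i = X i := by
      show (∑ jj : TIdx r, S jj * ∏ l, Ufam l (i l) (jj l)) = X i
      rw [← Equiv.sum_comp (Equiv.piSplitAt k (fun l => Fin (r l))).symm
          (fun jj : TIdx r => S jj * ∏ l, Ufam l (i l) (jj l)), Fintype.sum_prod_type]
      -- evaluate the split pieces
      have hjjk : ∀ (jk : Fin (r k)) (c : ∀ m : {m : Fin d // m ≠ k}, Fin (r m)),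
          ((Equiv.piSplitAt k (fun l => Fin (r l))).symm (jk, c)) k = jk := by
        intro jk c
        simp [Equiv.piSplitAt_symm_apply]
      have hjjm : ∀ (jk : Fin (r k)) (c : ∀ m : {m : Fin d // m ≠ k}, Fin (r m))
          (m : {m : Fin d // m ≠ k}),
          ((Equiv.piSplitAt k (fun l => Fin (r l))).symm (jk, c)) (m : Fin d) = c m := by
        intro jk c m
        simp only [Equiv.piSplitAt_symm_apply, dif_neg m.2]
      have hprod : ∀ (jk : Fin (r k)) (c : ∀ m : {m : Fin d // m ≠ k}, Fin (r m)),
          (∏ l, Ufam l (i l) (((Equiv.piSplitAt k (fun l => Fin (r l))).symm (jk, c)) l))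
          = Ufam k (i k) jk *
            (if (∀ m : {m : Fin d // m ≠ k}, ((i (m : Fin d)) : ℕ) = ((c m) : ℕ)) then 1 else 0) := by
        intro jk c
        rw [← Finset.mul_prod_erase Finset.univ _ (Finset.mem_univ k), hjjk]
        congr 1
        rw [← Finset.prod_coe_sort (Finset.univ.erase k)
          (fun l => Ufam l (i l) (((Equiv.piSplitAt k (fun l => Fin (r l))).symm (jk, c)) l))]
        rw [Fintype.prod_equiv (Equiv.subtypeEquivRight
            (fun m => by simp [Finset.mem_erase] : ∀ m : Fin d, m ∈ Finset.univ.erase k ↔ m ≠ k))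
          _ (fun m : {m : Fin d // m ≠ k} =>
              if ((i (m : Fin d)) : ℕ) = ((c m) : ℕ) then (1:ℝ) else 0) (fun x => ?_)]
        · rw [Fintype.prod_boole]
        · rcases x with ⟨x, hx⟩
          have hxk : x ≠ k := by simpa [Finset.mem_erase] using hx
          simp only [Equiv.subtypeEquivRight_apply]
          rw [hjjm jk c ⟨x, hxk⟩, hUfamne x hxk]
          rfl
      by_cases hin : ∀ m : {m : Fin d // m ≠ k}, ((i (m : Fin d)) : ℕ) < r (m : Fin d)
      · set ci : ∀ m : {m : Fin d // m ≠ k}, Fin (r m) := fun m => ⟨((i (m : Fin d)) : ℕ), hin m⟩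
          with hci
        have hcond : ∀ c : ∀ m : {m : Fin d // m ≠ k}, Fin (r m),
            (∀ m : {m : Fin d // m ≠ k}, ((i (m : Fin d)) : ℕ) = ((c m) : ℕ)) ↔ c = ci := by
          intro c
          constructor
          · intro hcc
            funext m
            apply Fin.ext
            simp [hci, ← hcc m]
          · intro hcc
            subst hcc
            intro m
            simp [hci]
        have hterm : ∀ (jk : Fin (r k)) (c : ∀ m : {m : Fin d // m ≠ k}, Fin (r m)),
            S ((Equiv.piSplitAt k (fun l => Fin (r l))).symm (jk, c)) *
              (∏ l, Ufam l (i l) (((Equiv.piSplitAt k (fun l => Fin (r l))).symm (jk, c)) l))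
            = if c = ci then
                S ((Equiv.piSplitAt k (fun l => Fin (r l))).symm (jk, c)) * Ufam k (i k) jk
              else 0 := by
          intro jk c
          rw [hprod]
          by_cases hc : c = ci
          · rw [if_pos ((hcond c).2 hc), if_pos hc]
            ring
          · rw [if_neg (fun hcc => hc ((hcond c).1 hcc)), if_neg hc]
            ring
        simp only [hterm]
        have hcollapse : ∀ jk : Fin (r k),
            (∑ c : ∀ m : {m : Fin d // m ≠ k}, Fin (r m), if c = ci then
                S ((Equiv.piSplitAt k (fun l => Fin (r l))).symm (jk, c)) * Ufam k (i k) jk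
              else 0)
            = S ((Equiv.piSplitAt k (fun l => Fin (r l))).symm (jk, ci)) * Ufam k (i k) jk := by
          intro jk
          rw [Finset.sum_ite_eq' Finset.univ ci]
          simp
        simp only [hcollapse]
        have hSci : ∀ jk : Fin (r k),
            S ((Equiv.piSplitAt k (fun l => Fin (r l))).symm (jk, ci))
            = if h : ci ∈ C then M jk (e.symm ⟨ci, h⟩) else 0 := by
          intro jk
          simp only [hS]
          have h1 : (fun m : {m : Fin d // m ≠ k} =>
              ((Equiv.piSplitAt k (fun l => Fin (r l))).symm (jk, ci)) (m : Fin d)) = ci := by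
            funext m
            exact hjjm jk ci m
          have h2 : ((Equiv.piSplitAt k (fun l => Fin (r l))).symm (jk, ci)) k = jk := hjjk jk ci
          rw [h1]  -- may fail: dependent dite
          rw [h2]
        by_cases hciC : ci ∈ C
        · have hXi : X i = B (i k) (e.symm ⟨ci, hciC⟩) := by
            rw [hBdef]
            congr 1
            funext l
            by_cases hl : l = k
            · subst hl
              apply Fin.ext
              rw [hΦ'k]
            · apply Fin.ext
              rw [hΦ'ne _ _ hl]
              have : e (e.symm ⟨ci, hciC⟩) = ⟨ci, hciC⟩ := e.apply_symm_apply _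
              rw [this]
          rw [hXi, hBUM, Matrix.mul_apply]
          refine Finset.sum_congr rfl fun jk _ => ?_
          rw [hSci, dif_pos hciC, hUfamk]
          ring
        · have hXi : X i = 0 := by
            refine hX _ (fun hmem => ?_)
            obtain ⟨x, -, hx⟩ := Finset.mem_image.1 hmem
            apply hciC
            have hcieq : ci = ((e x.2 : C) : ∀ m : {m : Fin d // m ≠ k}, Fin (r m)) := by
              funext m
              apply Fin.ext
              have := congrArg (fun ii : TIdx p => ((ii (m : Fin d)) : ℕ)) hx
              simp only [hΦ] at this
              rw [hΦ'ne _ _ m.2] at this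
              simp [hci, ← this]
            rw [hcieq]
            exact (e x.2).2
          rw [hXi]
          refine Finset.sum_eq_zero fun jk _ => ?_
          rw [hSci, dif_neg hciC]
          ring
      · push_neg at hin
        obtain ⟨m0, hm0⟩ := hin
        have hXi : X i = 0 := by
          refine hX _ (fun hmem => ?_)
          obtain ⟨x, -, hx⟩ := Finset.mem_image.1 hmem
          have hv : ((i (m0 : Fin d)) : ℕ) < r (m0 : Fin d) := by
            rw [← hx]
            have h5 := hΦ'ne (Fin.castLE (hsp k) x.1, x.2) (m0 : Fin d) m0.2
            simp only [hΦ]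
            rw [h5]
            exact (((e x.2 : C) : ∀ m : {m : Fin d // m ≠ k}, Fin (r m))
              ⟨(m0 : Fin d), m0.2⟩).isLt
          omega
        rw [hXi]
        refine Finset.sum_eq_zero fun jk _ => ?_
        refine Finset.sum_eq_zero fun c _ => ?_
        rw [hprod]
        rw [if_neg (fun hcc => ?_)]
        · ring
        · have h6 := hcc m0
          have hlt := (c m0).isLt
          omega
    exact key.symm

/-- positive mass of gaussian on sets of positive volume -/
lemma gaussianReal_set_pos (s : Set ℝ) (hvol : 0 < volume s)
    {v : NNReal} (hv : v ≠ 0) : 0 < gaussianReal 0 v s := by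
  rw [gaussianReal_apply 0 hv s]
  rw [lintegral_pos_iff_support (measurable_gaussianPDF 0 v)]
  have hsupp : Function.support (gaussianPDF 0 v) = Set.univ := by
    ext x
    simp only [Function.mem_support, Set.mem_univ, iff_true]
    rw [gaussianPDF]
    simp only [ne_eq, ENNReal.ofReal_eq_zero, not_le]
    exact gaussianPDFReal_pos 0 v x hv
  rw [hsupp]
  calc (0 : ENNReal) < volume s := hvol
    _ ≤ (volume.restrict s) Set.univ := by rw [Measure.restrict_apply_univ]

/-- scaling: gaussian with variance σ² is the map of the standard gaussian -/
lemma gaussianReal_sq_eq_map (σ : ℝ) (hσ : 0 < σ) :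
    gaussianReal 0 ⟨σ ^ 2, sq_nonneg σ⟩ = (gaussianReal 0 1).map (σ * ·) := by
  rw [gaussianReal_map_const_mul σ]
  congr 1
  · ring
  · ext
    simp
    rfl

lemma gaussianReal_Ici_eq (σ : ℝ) (hσ : 0 < σ) :
    gaussianReal 0 ⟨σ ^ 2, sq_nonneg σ⟩ (Set.Ici σ) = gaussianReal 0 1 (Set.Ici 1) := by
  rw [gaussianReal_sq_eq_map σ hσ,
    Measure.map_apply (measurable_id'.const_mul σ) measurableSet_Ici]
  congr 1
  ext x
  simp only [Set.mem_preimage, Set.mem_Ici]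
  constructor
  · intro h
    nlinarith
  · intro h
    nlinarith
lemma gaussianReal_Iic_eq (σ : ℝ) (hσ : 0 < σ) :
    gaussianReal 0 ⟨σ ^ 2, sq_nonneg σ⟩ (Set.Iic 0) = gaussianReal 0 1 (Set.Iic 0) := by
  rw [gaussianReal_sq_eq_map σ hσ,
    Measure.map_apply (measurable_id'.const_mul σ) measurableSet_Iic]
  congr 1
  ext x
  simp only [Set.mem_preimage, Set.mem_Iic]
  constructor
  · intro h
    nlinarith
  · intro h
    nlinarith

/-- marginal of a product of probability measures -/
lemma pi_eval_preimage {ι : Type*} [Fintype ι] (γ : Measure ℝ) [IsProbabilityMeasure γ]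
    (i : ι) (A : Set ℝ) (hA : MeasurableSet A) :
    (Measure.pi fun _ : ι => γ) (Function.eval i ⁻¹' A) = γ A := by
  classical
  rw [Set.eval_preimage]
  rw [Measure.pi_pi]
  rw [Finset.prod_eq_single i]
  · simp
  · intro j _ hj
    simp [Function.update_of_ne hj]
  · simp

/-- swapping the `i`-th coordinates of a pair of tensors preserves the doubled product
gaussian measure. -/
lemma measurePreserving_swapCoord {ι : Type*} [Fintype ι] [DecidableEq ι]
    (γ : Measure ℝ) [IsProbabilityMeasure γ] (i : ι) :
    MeasurePreserving
      (fun WZ : (ι → ℝ) × (ι → ℝ) =>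
        (Function.update WZ.1 i (WZ.2 i), Function.update WZ.2 i (WZ.1 i)))
      ((Measure.pi fun _ : ι => γ).prod (Measure.pi fun _ : ι => γ))
      ((Measure.pi fun _ : ι => γ).prod (Measure.pi fun _ : ι => γ)) := by
  classical
  set φ := MeasurableEquiv.sumPiEquivProdPi (fun _ : ι ⊕ ι => ℝ) with hφ
  have hφMP : MeasurePreserving φ (Measure.pi fun _ : ι ⊕ ι => γ)
      ((Measure.pi fun _ : ι => γ).prod (Measure.pi fun _ : ι => γ)) :=
    MeasureTheory.measurePreserving_sumPiEquivProdPi (fun _ : ι ⊕ ι => γ)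
  set e : ι ⊕ ι ≃ ι ⊕ ι := Equiv.swap (Sum.inl i) (Sum.inr i) with he
  have hψMP : MeasurePreserving (MeasurableEquiv.piCongrLeft (fun _ : ι ⊕ ι => ℝ) e)
      (Measure.pi fun _ : ι ⊕ ι => γ) (Measure.pi fun _ : ι ⊕ ι => γ) :=
    MeasureTheory.measurePreserving_piCongrLeft (fun _ : ι ⊕ ι => γ) e
  have hcomp := hφMP.comp (hψMP.comp (hφMP.symm φ))
  have hfun : (fun WZ : (ι → ℝ) × (ι → ℝ) =>
        (Function.update WZ.1 i (WZ.2 i), Function.update WZ.2 i (WZ.1 i)))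
      = φ ∘ (MeasurableEquiv.piCongrLeft (fun _ : ι ⊕ ι => ℝ) e) ∘ φ.symm := by
    funext WZ
    have hg : ∀ x : ι ⊕ ι,
        (MeasurableEquiv.piCongrLeft (fun _ : ι ⊕ ι => ℝ) e) (φ.symm WZ) x
        = (φ.symm WZ) (e.symm x) := by
      intro x
      have := Equiv.piCongrLeft_apply_apply (fun _ : ι ⊕ ι => ℝ) e (φ.symm WZ) (e.symm x)
      -- (piCongrLeft P e) f (e (e.symm x)) = f (e.symm x)
      rw [Equiv.apply_symm_apply] at this
      exact this
    refine Prod.ext ?_ ?_ <;> funext j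
    · show Function.update WZ.1 i (WZ.2 i) j
        = (MeasurableEquiv.piCongrLeft (fun _ : ι ⊕ ι => ℝ) e) (φ.symm WZ) (Sum.inl j)
      rw [hg (Sum.inl j), he, Equiv.symm_swap]
      by_cases hj : j = i
      · subst hj
        rw [Equiv.swap_apply_left, Function.update_self]
        rfl
      · rw [Equiv.swap_apply_of_ne_of_ne (fun hc => hj (Sum.inl_injective hc))
          (fun hc => Sum.inl_ne_inr hc), Function.update_of_ne hj]
        rfl
    · show Function.update WZ.2 i (WZ.1 i) j
        = (MeasurableEquiv.piCongrLeft (fun _ : ι ⊕ ι => ℝ) e) (φ.symm WZ) (Sum.inr j)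
      rw [hg (Sum.inr j), he, Equiv.symm_swap]
      by_cases hj : j = i
      · subst hj
        rw [Equiv.swap_apply_right, Function.update_self]
        rfl
      · rw [Equiv.swap_apply_of_ne_of_ne (fun hc => Sum.inr_ne_inl hc)
          (fun hc => hj (Sum.inr_injective hc)), Function.update_of_ne hj]
        rfl
  rw [hfun]
  exact hcomp

/-- Loading-values term of the minimax recovery lower bound. -/
theorem sparse_tensor_recovery_loading_term_lower_bound :
    ∃ c : ℝ, 0 < c ∧
      ∀ (d : ℕ), 2 ≤ d →
      ∀ (k : Fin d) (p r s : Fin d → ℕ) (Js : Finset (Fin d)) (σ : ℝ),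
        (∀ l, 1 ≤ r l) →
        (∀ l, r l ≤ ∏ m ∈ Finset.univ.erase l, r m) →
        (∀ l, 3 * r l ≤ s l) →
        (∀ l, s l ≤ p l) →
        (∀ l, l ∉ Js → s l = p l) →
        0 < σ →
        ∀ Xhat : (TIdx p → ℝ) → (TIdx p → ℝ),
          Measurable Xhat →
          ∃ X : TIdx p → ℝ, inClassF p r s Js X ∧
            ENNReal.ofReal (c * σ ^ 2 * (s k : ℝ) * (r k : ℝ)) ≤
              ∫⁻ Z, ENNReal.ofReal (tfrobSq (fun i => Xhat (fun i' => X i' + Z i') i - X i))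
                ∂(gaussianTensor p σ) := by
  classical
  set m0 : ENNReal := gaussianReal 0 1 (Set.Ici 1) * gaussianReal 0 1 (Set.Iic 0) with hm0
  have hm0pos : 0 < m0 := by
    refine ENNReal.mul_pos ?_ ?_
    · refine (gaussianReal_set_pos (Set.Ici 1) ?_ one_ne_zero).ne'
      rw [Real.volume_Ici]
      exact ENNReal.zero_lt_top
    · refine (gaussianReal_set_pos (Set.Iic 0) ?_ one_ne_zero).ne'
      rw [Real.volume_Iic]
      exact ENNReal.zero_lt_top
  have hm0le : m0 ≤ 1 := by
    calc m0 ≤ 1 * 1 := mul_le_mul' prob_le_one prob_le_one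
      _ = 1 := one_mul 1
  have hm0top : m0 ≠ ⊤ := (lt_of_le_of_lt hm0le ENNReal.one_lt_top).ne
  have hm0R : 0 < m0.toReal := ENNReal.toReal_pos hm0pos.ne' hm0top
  refine ⟨m0.toReal / 8, by positivity, ?_⟩
  intro d _hd k p r s Js σ hr1 hrprod hrs hsp _hJs hσ Xhat hXhat
  obtain ⟨T, hTcard, hTclass⟩ := exists_support_finset k p r s Js (hrprod k) hrs hsp
  set γσ : Measure ℝ := gaussianReal 0 ⟨σ ^ 2, sq_nonneg σ⟩ with hγσ
  haveI : IsProbabilityMeasure γσ := instIsProbabilityMeasureGaussianReal _ _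
  set μ : Measure (TIdx p → ℝ) := gaussianTensor p σ with hμ
  have hμdef : μ = Measure.pi fun _ : TIdx p => γσ := rfl
  haveI : IsProbabilityMeasure μ := by
    rw [hμdef]; infer_instance
  by_contra hcon
  push_neg at hcon
  set mask : (TIdx p → ℝ) → (TIdx p → ℝ) := fun W i => if i ∈ T then W i else 0 with hmask
  have hmaskclass : ∀ W, inClassF p r s Js (mask W) := fun W =>
    hTclass _ (fun i hi => by simp [hmask, hi])
  set B0 : ENNReal := ENNReal.ofReal (m0.toReal / 8 * σ ^ 2 * (s k : ℝ) * (r k : ℝ)) with hB0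
  set F : ((TIdx p → ℝ) × (TIdx p → ℝ)) → ENNReal := fun WZ =>
    ENNReal.ofReal (tfrobSq (fun i =>
      Xhat (fun i' => mask WZ.1 i' + WZ.2 i') i - mask WZ.1 i)) with hF
  -- measurability
  have hargmeas : Measurable (fun WZ : (TIdx p → ℝ) × (TIdx p → ℝ) =>
      (fun i' => mask WZ.1 i' + WZ.2 i')) := by
    apply measurable_pi_lambda
    intro i'
    by_cases hi' : i' ∈ T
    · simp only [hmask, if_pos hi']
      exact ((measurable_pi_apply i').comp measurable_fst).add
        ((measurable_pi_apply i').comp measurable_snd)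
    · simp only [hmask, if_neg hi']
      simpa [Function.comp_def] using ((measurable_pi_apply i').comp measurable_snd)
  have hdiffmeas : ∀ i : TIdx p, Measurable (fun WZ : (TIdx p → ℝ) × (TIdx p → ℝ) =>
      Xhat (fun i' => mask WZ.1 i' + WZ.2 i') i - mask WZ.1 i) := by
    intro i
    refine ((measurable_pi_apply i).comp (hXhat.comp hargmeas)).sub ?_
    by_cases hi : i ∈ T
    · simp only [hmask, if_pos hi]
      exact (measurable_pi_apply i).comp measurable_fst
    · simp only [hmask, if_neg hi]
      exact measurable_const
  have hFmeas : Measurable F := by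
    rw [hF]
    refine Measurable.ennreal_ofReal ?_
    simp only [tfrobSq]
    exact Finset.measurable_sum Finset.univ (fun i _ => (hdiffmeas i).pow_const 2)
  -- upper bound from the contradiction hypothesis
  have hA_le : ∫⁻ WZ, F WZ ∂(μ.prod μ) ≤ B0 := by
    rw [lintegral_prod F hFmeas.aemeasurable]
    have hptwise : ∀ W, (∫⁻ Z, F (W, Z) ∂μ) ≤ B0 := by
      intro W
      exact le_of_lt (hcon (mask W) (hmaskclass W))
    calc ∫⁻ W, (∫⁻ Z, F (W, Z) ∂μ) ∂μ ≤ ∫⁻ _, B0 ∂μ := lintegral_mono hptwise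
      _ = B0 := by simp
  -- coordinate pieces
  set G : TIdx p → ((TIdx p → ℝ) × (TIdx p → ℝ)) → ENNReal := fun i WZ =>
    ENNReal.ofReal ((Xhat (fun i' => mask WZ.1 i' + WZ.2 i') i - WZ.1 i) ^ 2) with hG
  have hGmeas : ∀ i, Measurable (G i) := by
    intro i
    refine Measurable.ennreal_ofReal ?_
    exact (((measurable_pi_apply i).comp (hXhat.comp hargmeas)).sub
      ((measurable_pi_apply i).comp measurable_fst)).pow_const 2
  have hFlow : ∀ WZ, (∑ i ∈ T, G i WZ) ≤ F WZ := by
    intro WZ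
    have h1 : ∀ i ∈ T, G i WZ = ENNReal.ofReal
        ((Xhat (fun i' => mask WZ.1 i' + WZ.2 i') i - mask WZ.1 i) ^ 2) := by
      intro i hi
      rw [hG]
      simp only [hmask, if_pos hi]
    rw [Finset.sum_congr rfl h1, ← ENNReal.ofReal_sum_of_nonneg (fun i _ => sq_nonneg _)]
    rw [hF]
    refine ENNReal.ofReal_le_ofReal ?_
    simp only [tfrobSq]
    exact Finset.sum_le_sum_of_subset_of_nonneg (Finset.subset_univ T)
      (fun i _ _ => sq_nonneg _)
  have hsum_le : ∑ i ∈ T, ∫⁻ WZ, G i WZ ∂(μ.prod μ) ≤ ∫⁻ WZ, F WZ ∂(μ.prod μ) := by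
    rw [← lintegral_finset_sum T (fun i _ => hGmeas i)]
    exact lintegral_mono hFlow
  -- the per-coordinate two-point argument
  have hJ : ∀ i ∈ T, ENNReal.ofReal (σ ^ 2 / 2) * m0 ≤ 2 * ∫⁻ WZ, G i WZ ∂(μ.prod μ) := by
    intro i hi
    set τ : ((TIdx p → ℝ) × (TIdx p → ℝ)) → ((TIdx p → ℝ) × (TIdx p → ℝ)) := fun WZ =>
      (Function.update WZ.1 i (WZ.2 i), Function.update WZ.2 i (WZ.1 i)) with hτ
    have hMP : MeasurePreserving τ (μ.prod μ) (μ.prod μ) := by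
      rw [hμdef]
      exact measurePreserving_swapCoord γσ i
    set G' : ((TIdx p → ℝ) × (TIdx p → ℝ)) → ENNReal := fun WZ =>
      ENNReal.ofReal ((Xhat (fun i' => mask WZ.1 i' + WZ.2 i') i - WZ.2 i) ^ 2) with hG'
    have hG'meas : Measurable G' := by
      refine Measurable.ennreal_ofReal ?_
      exact (((measurable_pi_apply i).comp (hXhat.comp hargmeas)).sub
        ((measurable_pi_apply i).comp measurable_snd)).pow_const 2
    have hswap : ∫⁻ WZ, G' WZ ∂(μ.prod μ) = ∫⁻ WZ, G i WZ ∂(μ.prod μ) := by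
      have h1 : ∀ WZ, G' (τ WZ) = G i WZ := by
        intro WZ
        have harg : (fun i' => mask (Function.update WZ.1 i (WZ.2 i)) i'
              + (Function.update WZ.2 i (WZ.1 i)) i')
            = (fun i' => mask WZ.1 i' + WZ.2 i') := by
          funext i'
          by_cases hii : i' = i
          · subst hii
            simp only [hmask, if_pos hi, Function.update_self]
            ring
          · simp only [hmask, Function.update_of_ne hii]
        simp only [hG', hG, hτ]
        rw [harg, Function.update_self]
      rw [← hMP.lintegral_comp hG'meas]
      exact lintegral_congr h1
    set Sset : Set ((TIdx p → ℝ) × (TIdx p → ℝ)) :=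
      (Function.eval i ⁻¹' Set.Ici σ) ×ˢ (Function.eval i ⁻¹' Set.Iic 0) with hSset
    have hSsetm : MeasurableSet Sset :=
      ((measurable_pi_apply i) measurableSet_Ici).prod
        ((measurable_pi_apply i) measurableSet_Iic)
    have hpoint : ∀ WZ, Sset.indicator (fun _ => ENNReal.ofReal (σ ^ 2 / 2)) WZ
        ≤ G i WZ + G' WZ := by
      intro WZ
      by_cases hWZ : WZ ∈ Sset
      · rw [Set.indicator_of_mem hWZ]
        obtain ⟨hW, hZ⟩ := hWZ
        have hW' : σ ≤ WZ.1 i := hW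
        have hZ' : WZ.2 i ≤ 0 := hZ
        rw [hG, hG', ← ENNReal.ofReal_add (sq_nonneg _) (sq_nonneg _)]
        refine ENNReal.ofReal_le_ofReal ?_
        nlinarith [sq_nonneg (Xhat (fun i' => mask WZ.1 i' + WZ.2 i') i - WZ.1 i +
          (Xhat (fun i' => mask WZ.1 i' + WZ.2 i') i - WZ.2 i)),
          sq_nonneg (WZ.1 i - WZ.2 i - σ)]
      · rw [Set.indicator_of_notMem hWZ]
        exact bot_le
    have hind : ∫⁻ WZ, Sset.indicator (fun _ => ENNReal.ofReal (σ ^ 2 / 2)) WZ ∂(μ.prod μ)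
        = ENNReal.ofReal (σ ^ 2 / 2) * m0 := by
      rw [lintegral_indicator hSsetm, setLIntegral_const]
      congr 1
      rw [hSset, hμdef, Measure.prod_prod, pi_eval_preimage γσ i _ measurableSet_Ici,
        pi_eval_preimage γσ i _ measurableSet_Iic, hγσ,
        gaussianReal_Ici_eq σ hσ, gaussianReal_Iic_eq σ hσ]
    calc ENNReal.ofReal (σ ^ 2 / 2) * m0
        = ∫⁻ WZ, Sset.indicator (fun _ => ENNReal.ofReal (σ ^ 2 / 2)) WZ ∂(μ.prod μ) := hind.symm
      _ ≤ ∫⁻ WZ, (G i WZ + G' WZ) ∂(μ.prod μ) := lintegral_mono hpoint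
      _ = ∫⁻ WZ, G i WZ ∂(μ.prod μ) + ∫⁻ WZ, G' WZ ∂(μ.prod μ) :=
          lintegral_add_left (hGmeas i) _
      _ = 2 * ∫⁻ WZ, G i WZ ∂(μ.prod μ) := by rw [hswap, two_mul]
  -- combine everything
  have hlower : ENNReal.ofReal (σ ^ 2 / 2) * m0 * (T.card : ENNReal)
      ≤ 2 * ∫⁻ WZ, F WZ ∂(μ.prod μ) := by
    calc ENNReal.ofReal (σ ^ 2 / 2) * m0 * (T.card : ENNReal)
        = ∑ _i ∈ T, ENNReal.ofReal (σ ^ 2 / 2) * m0 := by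
          rw [Finset.sum_const, nsmul_eq_mul, mul_comm]
      _ ≤ ∑ i ∈ T, 2 * ∫⁻ WZ, G i WZ ∂(μ.prod μ) := Finset.sum_le_sum hJ
      _ = 2 * ∑ i ∈ T, ∫⁻ WZ, G i WZ ∂(μ.prod μ) := by rw [Finset.mul_sum]
      _ ≤ 2 * ∫⁻ WZ, F WZ ∂(μ.prod μ) := mul_le_mul_right hsum_le 2
  have hfinal : ENNReal.ofReal (σ ^ 2 / 2) * m0 * (T.card : ENNReal) ≤ 2 * B0 :=
    le_trans hlower (mul_le_mul_right hA_le 2)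
  rw [hTcard] at hfinal
  -- numeric contradiction
  have hsk : 3 ≤ s k := le_trans (by have := hr1 k; omega) (hrs k)
  have hrk : 1 ≤ r k := hr1 k
  have hcast : ((s k * r k : ℕ) : ENNReal) = ENNReal.ofReal ((s k : ℝ) * (r k : ℝ)) := by
    rw [← ENNReal.ofReal_natCast (s k * r k)]
    congr 1
    push_cast
    ring
  have hLHS : ENNReal.ofReal (σ ^ 2 / 2) * m0 * ((s k * r k : ℕ) : ENNReal)
      = ENNReal.ofReal (σ ^ 2 / 2 * m0.toReal * ((s k : ℝ) * (r k : ℝ))) := by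
    have h2 : ENNReal.ofReal (σ ^ 2 / 2) * m0 = ENNReal.ofReal (σ ^ 2 / 2 * m0.toReal) := by
      rw [ENNReal.ofReal_mul (by positivity : (0:ℝ) ≤ σ ^ 2 / 2), ENNReal.ofReal_toReal hm0top]
    rw [hcast, h2, ← ENNReal.ofReal_mul (by positivity)]
  have hRHS : 2 * B0 = ENNReal.ofReal (2 * (m0.toReal / 8 * σ ^ 2 * (s k : ℝ) * (r k : ℝ))) := by
    rw [hB0, ENNReal.ofReal_mul (by norm_num : (0:ℝ) ≤ 2)]
    norm_num
  rw [hLHS, hRHS] at hfinal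
  have hlt : 2 * (m0.toReal / 8 * σ ^ 2 * (s k : ℝ) * (r k : ℝ))
      < σ ^ 2 / 2 * m0.toReal * ((s k : ℝ) * (r k : ℝ)) := by
    have hskR : (3 : ℝ) ≤ (s k : ℝ) := by exact_mod_cast hsk
    have hrkR : (1 : ℝ) ≤ (r k : ℝ) := by exact_mod_cast hrk
    have hσ2 : 0 < σ ^ 2 := by positivity
    have hsk0 : (0:ℝ) < (s k : ℝ) := lt_of_lt_of_le (by norm_num) hskR
    have hrk0 : (0:ℝ) < (r k : ℝ) := lt_of_lt_of_le (by norm_num) hrkR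
    nlinarith [mul_pos (mul_pos (mul_pos hm0R hσ2) hsk0) hrk0]
  exact absurd hfinal (not_le.mpr (by
    refine ENNReal.ofReal_lt_ofReal_iff ?_ |>.mpr hlt
    positivity))

end
end

section
/- Concentration of the median-of-absolute-values noise-level estimator. There exist absolute constants c, C, c_0 > 0 such that the following holds. Let p ≥ 2 be an integer, σ > 0, and let X ∈ ℝ^p be a fixed vector with at most s nonzero entries, where s ≤ c_0 √(p log p). Let Z ∈ ℝ^p have i.i.d. N(0,σ²) entries and set Y = X + Z. Let z_{0.75} denote the 0.75-quantile of the standard normal distribution, i.e. the unique z with Φ(z) = 3/4, where Φ is the standard normal cumulative distribution function. Then with probability at least 1 − C/p, every sample median m̂ of (|Y_1|,…,|Y_p|) — that is, every real number m̂ satisfying #{i : |Y_i| ≤ m̂} ≥ p/2 and #{i : |Y_i| ≥ m̂} ≥ p/2 — satisfies | m̂ / z_{0.75} − σ | ≤ c σ √((log p)/p). -/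
open MeasureTheory ProbabilityTheory BigOperators Real Set Filter
open scoped NNReal ENNReal

noncomputable section

namespace MedianAux

/-- The standard normal CDF. -/
def Phi (t : ℝ) : ℝ := (gaussianReal 0 1 (Set.Iic t)).toReal

lemma phi_pos (x : ℝ) : 0 < gaussianPDFReal 0 1 x := gaussianPDFReal_pos 0 1 x one_ne_zero

lemma phi_anti {x y : ℝ} (h : |x| ≤ |y|) : gaussianPDFReal 0 1 y ≤ gaussianPDFReal 0 1 x := by
  unfold gaussianPDFReal
  have h2 : (y - 0) ^ 2 ≤ (x - 0) ^ 2 → True := fun _ => trivial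
  have hxy : (x - 0) ^ 2 ≤ (y - 0) ^ 2 := by
    simp only [sub_zero]
    calc x ^ 2 = |x| ^ 2 := (sq_abs x).symm
      _ ≤ |y| ^ 2 := by exact pow_le_pow_left₀ (abs_nonneg x) h 2
      _ = y ^ 2 := sq_abs y
  have hc : (0:ℝ) ≤ (√(2 * π * (1:ℝ≥0)))⁻¹ := by positivity
  refine mul_le_mul_of_nonneg_left ?_ hc
  apply Real.exp_le_exp.2
  have : ((1:ℝ≥0):ℝ) = 1 := rfl
  rw [this]
  linarith

lemma gauss_Ioc_toReal {a b : ℝ} (hab : a ≤ b) :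
    (gaussianReal 0 1 (Ioc a b)).toReal = ∫ x in a..b, gaussianPDFReal 0 1 x := by
  rw [gaussianReal_apply_eq_integral 0 one_ne_zero,
    ENNReal.toReal_ofReal (setIntegral_nonneg measurableSet_Ioc fun x _ => (phi_pos x).le),
    intervalIntegral.integral_of_le hab]

lemma Phi_diff {a b : ℝ} (hab : a ≤ b) : Phi b = Phi a + ∫ x in a..b, gaussianPDFReal 0 1 x := by
  have h : gaussianReal 0 1 (Iic b) = gaussianReal 0 1 (Iic a) + gaussianReal 0 1 (Ioc a b) := by
    rw [← measure_union (Set.Iic_disjoint_Ioc le_rfl) measurableSet_Ioc,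
      Set.Iic_union_Ioc_eq_Iic hab]
  rw [Phi, h, ENNReal.toReal_add (measure_ne_top _ _) (measure_ne_top _ _),
    gauss_Ioc_toReal hab, Phi]

lemma Phi_mono {a b : ℝ} (hab : a ≤ b) : Phi a ≤ Phi b := by
  rw [Phi_diff hab]
  have h : 0 ≤ ∫ x in a..b, gaussianPDFReal 0 1 x :=
    intervalIntegral.integral_nonneg hab (fun x _ => (phi_pos x).le)
  linarith

lemma Phi_strict {a b : ℝ} (hab : a < b) : Phi a < Phi b := by
  rw [Phi_diff hab.le]
  have := intervalIntegral.intervalIntegral_pos_of_pos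
    ((integrable_gaussianPDFReal 0 1).intervalIntegrable) phi_pos hab
  linarith

lemma gauss_singleton (x : ℝ) : gaussianReal 0 1 {x} = 0 :=
  gaussianReal_absolutelyContinuous 0 one_ne_zero (volume_singleton)

lemma gauss_Iio (u : ℝ) : gaussianReal 0 1 (Iio u) = gaussianReal 0 1 (Iic u) := by
  refine le_antisymm (measure_mono Iio_subset_Iic_self) ?_
  rw [← Set.Iio_union_right]
  refine (measure_union_le _ _).trans ?_
  rw [gauss_singleton, add_zero]

lemma gauss_symm (u : ℝ) : gaussianReal 0 1 (Iic (-u)) = gaussianReal 0 1 (Ici u) := by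
  have h1 : (NNReal.mk ((-1:ℝ)^2) (sq_nonneg _)) = 1 := by ext; show ((-1:ℝ)^2) = 1; norm_num
  have hmap := gaussianReal_map_const_mul (μ := 0) (v := 1) (-1)
  rw [h1, one_mul, mul_zero] at hmap
  calc gaussianReal 0 1 (Iic (-u))
      = ((gaussianReal 0 1).map (fun x => -1 * x)) (Iic (-u)) := by rw [hmap]
    _ = gaussianReal 0 1 ((fun x : ℝ => -1 * x) ⁻¹' (Iic (-u))) :=
        Measure.map_apply (by fun_prop) measurableSet_Iic
    _ = gaussianReal 0 1 (Ici u) := by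
        congr 1
        ext x
        simp only [Set.mem_preimage, Set.mem_Iic, Set.mem_Ici]
        constructor <;> intro <;> linarith

lemma gauss_Ici (u : ℝ) : (gaussianReal 0 1 (Ici u)).toReal = 1 - Phi u := by
  rw [← compl_Iio, measure_compl measurableSet_Iio (measure_ne_top _ _), measure_univ,
    ENNReal.toReal_sub_of_le prob_le_one ENNReal.one_ne_top, ENNReal.toReal_one, gauss_Iio, Phi]

lemma Phi_neg (u : ℝ) : Phi (-u) = 1 - Phi u := by
  rw [Phi, gauss_symm, gauss_Ici]

lemma Phi_zero : Phi 0 = 1 / 2 := by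
  have h := Phi_neg 0
  rw [neg_zero] at h
  linarith

lemma gauss_Icc {u : ℝ} (hu : 0 ≤ u) : (gaussianReal 0 1 (Icc (-u) u)).toReal = 2 * Phi u - 1 := by
  have hdisj : Disjoint (Iio (-u)) (Icc (-u) u) := by
    rw [Set.disjoint_left]
    intro x hx hx2
    exact absurd hx2.1 (not_le.2 hx)
  have hun : Iio (-u) ∪ Icc (-u) u = Iic u := by
    ext x
    simp only [Set.mem_union, Set.mem_Iio, Set.mem_Icc, Set.mem_Iic]
    constructor
    · rintro (h | h) <;> [linarith; exact h.2]
    · intro h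
      rcases lt_or_ge x (-u) with h' | h'
      · exact Or.inl h'
      · exact Or.inr ⟨h', h⟩
  have h : gaussianReal 0 1 (Iic u)
      = gaussianReal 0 1 (Iio (-u)) + gaussianReal 0 1 (Icc (-u) u) := by
    rw [← hun, measure_union hdisj measurableSet_Icc]
  have h2 := congrArg ENNReal.toReal h
  rw [ENNReal.toReal_add (measure_ne_top _ _) (measure_ne_top _ _), gauss_Iio] at h2
  have h3 : (gaussianReal 0 1 (Iic (-u))).toReal = 1 - Phi u := Phi_neg u
  have h4 : (gaussianReal 0 1 (Iic u)).toReal = Phi u := rfl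
  rw [h4, h3] at h2
  linarith

lemma gauss_two_tails {u : ℝ} (hu : 0 < u) :
    (gaussianReal 0 1 (Iic (-u) ∪ Ici u)).toReal = 2 - 2 * Phi u := by
  have hdisj : Disjoint (Iic (-u)) (Ici u) := by
    rw [Set.disjoint_left]
    intro x h1 h2
    simp only [Set.mem_Iic, Set.mem_Ici] at h1 h2
    linarith
  rw [measure_union hdisj measurableSet_Ici,
    ENNReal.toReal_add (measure_ne_top _ _) (measure_ne_top _ _), gauss_Ici]
  have h3 : (gaussianReal 0 1 (Iic (-u))).toReal = 1 - Phi u := Phi_neg u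
  rw [h3]
  ring

lemma exists_z0 : ∃ z0 : ℝ, 0 < z0 ∧ Phi z0 = 3 / 4 := by
  have hcont0 : Continuous fun t => ∫ x in (0:ℝ)..t, gaussianPDFReal 0 1 x :=
    (integrable_gaussianPDFReal 0 1).continuous_primitive 0
  have hG : ∀ t, Phi t = 1 / 2 + ∫ x in (0:ℝ)..t, gaussianPDFReal 0 1 x := by
    intro t
    rcases le_total 0 t with h | h
    · rw [Phi_diff h, Phi_zero]
    · have h2 := Phi_diff (a := t) (b := 0) h
      rw [Phi_zero] at h2
      rw [intervalIntegral.integral_symm]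
      linarith
  have hPhiCont : Continuous Phi := by
    have h : Phi = fun t => 1 / 2 + ∫ x in (0:ℝ)..t, gaussianPDFReal 0 1 x := funext hG
    rw [h]
    exact continuous_const.add hcont0
  have htend : Tendsto (fun t : ℝ => gaussianReal 0 1 (Iic t)) atTop (nhds 1) := by
    have := tendsto_measure_Iic_atTop (gaussianReal 0 1)
    rwa [measure_univ] at this
  have htendR : Tendsto Phi atTop (nhds 1) := by
    have h := (ENNReal.tendsto_toReal ENNReal.one_ne_top).comp htend
    exact h
  obtain ⟨b, hb⟩ := (htendR.eventually (eventually_ge_nhds (by norm_num : (3/4:ℝ) < 1))).exists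
  have hb0 : (0:ℝ) ≤ b := by
    by_contra h
    push_neg at h
    have h2 := Phi_mono h.le
    rw [Phi_zero] at h2
    linarith
  have h34 : (3/4:ℝ) ∈ Icc (Phi 0) (Phi b) := by
    rw [Phi_zero]
    exact ⟨by norm_num, hb⟩
  obtain ⟨z0, _, hz0⟩ := intermediate_value_Icc hb0 hPhiCont.continuousOn h34
  refine ⟨z0, ?_, hz0⟩
  by_contra h
  push_neg at h
  have h2 := Phi_mono h
  rw [Phi_zero, hz0] at h2
  linarith

lemma gauss_scale {σ : ℝ} (hσ : 0 < σ) (S : Set ℝ) (hS : MeasurableSet S) :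
    gaussianReal 0 ⟨σ ^ 2, sq_nonneg σ⟩ S = gaussianReal 0 1 ((fun x => σ * x) ⁻¹' S) := by
  have hmap := gaussianReal_map_const_mul (μ := 0) (v := 1) σ
  rw [mul_one, mul_zero] at hmap
  show gaussianReal 0 (NNReal.mk (σ ^ 2) (sq_nonneg σ)) S = _
  rw [← hmap, Measure.map_apply (by fun_prop : Measurable fun x : ℝ => σ * x) hS]



lemma mgf_bound {l q : ℝ} (hq0 : 0 ≤ q) (hq1 : q ≤ 1) :
    q * Real.exp (l * (1 - q)) + (1 - q) * Real.exp (l * (0 - q)) ≤ Real.exp (l ^ 2 / 2) := by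
  have chord : ∀ y : ℝ, -1 ≤ y → y ≤ 1 →
      Real.exp (l * y) ≤ (1 - y) / 2 * Real.exp (-l) + (1 + y) / 2 * Real.exp l := by
    intro y hy1 hy2
    have h := convexOn_exp.2 (Set.mem_univ (-l)) (Set.mem_univ l)
      (by linarith : (0:ℝ) ≤ (1 - y) / 2) (by linarith : (0:ℝ) ≤ (1 + y) / 2) (by ring)
    simp only [smul_eq_mul] at h
    calc Real.exp (l * y) = Real.exp ((1 - y) / 2 * (-l) + (1 + y) / 2 * l) := by ring_nf
      _ ≤ _ := h
  have h1 := chord (1 - q) (by linarith) (by linarith)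
  have h2 := chord (0 - q) (by linarith) (by linarith)
  have h3 : (Real.exp l + Real.exp (-l)) / 2 ≤ Real.exp (l ^ 2 / 2) := by
    rw [← Real.cosh_eq]
    exact Real.cosh_le_exp_half_sq l
  nlinarith [mul_le_mul_of_nonneg_left h1 hq0,
    mul_le_mul_of_nonneg_left h2 (by linarith : (0:ℝ) ≤ 1 - q)]

lemma chernoff (μ : Measure ℝ) [IsProbabilityMeasure μ] {p : ℕ} (hp : 0 < p)
    (P : Fin p → ℝ → Prop) [∀ i, DecidablePred (P i)]
    (hP : ∀ i, MeasurableSet {x | P i x}) {a : ℝ} (ha : 0 ≤ a) :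
    (Measure.pi fun _ : Fin p => μ)
      {z | (∑ i, (μ {x | P i x}).toReal) + a ≤
        ((Finset.univ.filter fun i => P i (z i)).card : ℝ)}
      ≤ ENNReal.ofReal (Real.exp (-a ^ 2 / (2 * p))) := by
  letI : MeasureSpace ℝ := ⟨μ⟩
  haveI : IsProbabilityMeasure (volume : Measure ℝ) := ‹_›
  have hpR : (0:ℝ) < p := by exact_mod_cast hp
  set l : ℝ := a / p with hl
  have hl0 : 0 ≤ l := div_nonneg ha hpR.le
  set q : Fin p → ℝ := fun i => (μ {x | P i x}).toReal with hqdef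
  have hq0 : ∀ i, 0 ≤ q i := fun i => ENNReal.toReal_nonneg
  have hq1 : ∀ i, q i ≤ 1 := by
    intro i
    have h := prob_le_one (μ := μ) (s := {x | P i x})
    calc q i ≤ (1 : ℝ≥0∞).toReal := ENNReal.toReal_mono ENNReal.one_ne_top h
      _ = 1 := ENNReal.toReal_one
  set f : Fin p → ℝ → ℝ :=
    fun i x => Real.exp (l * (({x | P i x}).indicator (fun _ => (1:ℝ)) x - q i)) with hf
  have hbnd : ∀ i x, |({x | P i x}).indicator (fun _ => (1:ℝ)) x - q i| ≤ 1 := by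
    intro i x
    rw [abs_le]
    by_cases h : P i x
    · rw [Set.indicator_of_mem (show x ∈ {x | P i x} from h)]
      constructor <;> [linarith [hq1 i]; linarith [hq0 i]]
    · rw [Set.indicator_of_notMem (show x ∉ {x | P i x} from h)]
      constructor <;> [linarith [hq1 i]; linarith [hq0 i]]
  have hmeas : ∀ i, Measurable (f i) := by
    intro i
    exact Real.measurable_exp.comp
      ((((measurable_const.indicator (hP i)).sub measurable_const).const_mul l))
  have hfint : ∀ i, Integrable (f i) := by
    intro i
    refine Integrable.mono' (integrable_const (Real.exp |l|))
      (hmeas i).aestronglyMeasurable (ae_of_all _ fun x => ?_)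
    rw [Real.norm_eq_abs, abs_of_pos (Real.exp_pos _)]
    apply Real.exp_le_exp.2
    calc l * (({x | P i x}).indicator (fun _ => (1:ℝ)) x - q i)
        ≤ |l * (({x | P i x}).indicator (fun _ => (1:ℝ)) x - q i)| := le_abs_self _
      _ = |l| * |({x | P i x}).indicator (fun _ => (1:ℝ)) x - q i| := abs_mul _ _
      _ ≤ |l| * 1 := mul_le_mul_of_nonneg_left (hbnd i x) (abs_nonneg l)
      _ = |l| := mul_one _
  have hEi : ∀ i, ∫ x, f i x ≤ Real.exp (l ^ 2 / 2) := by
    intro i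
    have hsplit : f i = fun x =>
        ({x | P i x}).indicator (fun _ => Real.exp (l * (1 - q i))) x
          + ({x | P i x})ᶜ.indicator (fun _ => Real.exp (l * (0 - q i))) x := by
      funext x
      by_cases h : P i x
      · rw [Set.indicator_of_mem (show x ∈ {x | P i x} from h),
          Set.indicator_of_notMem (show x ∉ {x | P i x}ᶜ by simpa using h)]
        simp only [hf, Set.indicator_of_mem (show x ∈ {x | P i x} from h), add_zero]
      · rw [Set.indicator_of_notMem (show x ∉ {x | P i x} from h),
          Set.indicator_of_mem (show x ∈ {x | P i x}ᶜ by simpa using h)]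
        simp only [hf, Set.indicator_of_notMem (show x ∉ {x | P i x} from h), zero_add]
    rw [hsplit, integral_add ((integrable_const _).indicator (hP i))
        ((integrable_const _).indicator (hP i).compl),
      integral_indicator_const _ (hP i), integral_indicator_const _ (hP i).compl,
      smul_eq_mul, smul_eq_mul]
    have hv1 : (volume : Measure ℝ) = μ := rfl
    have hcompl : ((volume : Measure ℝ) ({x | P i x}ᶜ)).toReal = 1 - q i := by
      rw [measure_compl (hP i) (measure_ne_top _ _), measure_univ,
        ENNReal.toReal_sub_of_le prob_le_one ENNReal.one_ne_top, ENNReal.toReal_one, hv1]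
    simp only [Measure.real]
    rw [hcompl]
    have hqi : ((volume : Measure ℝ) {x | P i x}).toReal = q i := by rw [hv1]
    rw [hqi, mul_comm (q i) _, mul_comm (1 - q i) _] at *
    calc Real.exp (l * (1 - q i)) * q i + Real.exp (l * (0 - q i)) * (1 - q i)
        = q i * Real.exp (l * (1 - q i)) + (1 - q i) * Real.exp (l * (0 - q i)) := by ring
      _ ≤ Real.exp (l ^ 2 / 2) := mgf_bound (hq0 i) (hq1 i)
  have hEi0 : ∀ i, 0 ≤ ∫ x, f i x := fun i => integral_nonneg fun x => (Real.exp_pos _).le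
  have hFint : Integrable (fun z : Fin p → ℝ => ∏ i, f i (z i)) :=
    Integrable.fintype_prod hfint
  have hprod : ∫ z : Fin p → ℝ, ∏ i, f i (z i) = ∏ i, ∫ x, f i x :=
    integral_fintype_prod_eq_prod f
  have hIbound : ∫ z : Fin p → ℝ, ∏ i, f i (z i) ≤ Real.exp ((p : ℝ) * (l ^ 2 / 2)) := by
    rw [hprod]
    calc ∏ i, ∫ x, f i x ≤ ∏ _i : Fin p, Real.exp (l ^ 2 / 2) :=
          Finset.prod_le_prod (fun i _ => hEi0 i) (fun i _ => hEi i)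
      _ = Real.exp (l ^ 2 / 2) ^ p := by rw [Finset.prod_const, Finset.card_univ, Fintype.card_fin]
      _ = Real.exp ((p : ℝ) * (l ^ 2 / 2)) := by rw [← Real.exp_nat_mul]
  set E := {z : Fin p → ℝ | (∑ i, q i) + a ≤
    ((Finset.univ.filter fun i => P i (z i)).card : ℝ)} with hE
  have hsub : E ⊆ {z : Fin p → ℝ | Real.exp (l * a) ≤ ∏ i, f i (z i)} := by
    intro z hz
    simp only [hE, Set.mem_setOf_eq] at hz ⊢
    have hcard : ((Finset.univ.filter fun i => P i (z i)).card : ℝ)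
        = ∑ i, ({x | P i x}).indicator (fun _ => (1:ℝ)) (z i) := by
      rw [Finset.card_filter]
      push_cast
      refine Finset.sum_congr rfl fun i _ => ?_
      by_cases h : P i (z i) <;> simp [h]
    have hFz : ∏ i, f i (z i)
        = Real.exp (∑ i, l * (({x | P i x}).indicator (fun _ => (1:ℝ)) (z i) - q i)) :=
      (Real.exp_sum _ _).symm
    rw [hFz]
    apply Real.exp_le_exp.2
    have hsum : ∑ i, l * (({x | P i x}).indicator (fun _ => (1:ℝ)) (z i) - q i)
        = l * (((Finset.univ.filter fun i => P i (z i)).card : ℝ) - ∑ i, q i) := by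
      rw [← Finset.mul_sum, hcard, Finset.sum_sub_distrib]
    rw [hsum]
    exact mul_le_mul_of_nonneg_left (by linarith) hl0
  have hvol : (Measure.pi fun _ : Fin p => μ) = (volume : Measure (Fin p → ℝ)) := rfl
  rw [hvol]
  rw [ENNReal.le_ofReal_iff_toReal_le (measure_ne_top _ _) (Real.exp_pos _).le]
  have hm1 : ((volume : Measure (Fin p → ℝ)) E).toReal
      ≤ ((volume : Measure (Fin p → ℝ)) {z | Real.exp (l * a) ≤ ∏ i, f i (z i)}).toReal :=
    ENNReal.toReal_mono (measure_ne_top _ _) (measure_mono hsub)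
  have hmarkov := mul_meas_ge_le_integral_of_nonneg (μ := (volume : Measure (Fin p → ℝ)))
    (ae_of_all _ fun z => Finset.prod_nonneg fun i _ => (Real.exp_pos _).le) hFint
    (Real.exp (l * a))
  have hεpos := Real.exp_pos (l * a)
  have hm2 : ((volume : Measure (Fin p → ℝ)) {z | Real.exp (l * a) ≤ ∏ i, f i (z i)}).toReal
      ≤ Real.exp ((p : ℝ) * (l ^ 2 / 2)) / Real.exp (l * a) := by
    rw [le_div_iff₀ hεpos]
    calc ((volume : Measure (Fin p → ℝ)) {z | Real.exp (l * a) ≤ ∏ i, f i (z i)}).toReal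
          * Real.exp (l * a)
        = Real.exp (l * a) *
          ((volume : Measure (Fin p → ℝ)) {z | Real.exp (l * a) ≤ ∏ i, f i (z i)}).toReal :=
          mul_comm _ _
      _ ≤ ∫ z : Fin p → ℝ, ∏ i, f i (z i) := hmarkov
      _ ≤ Real.exp ((p : ℝ) * (l ^ 2 / 2)) := hIbound
  have hexp : Real.exp ((p : ℝ) * (l ^ 2 / 2)) / Real.exp (l * a)
      = Real.exp (-a ^ 2 / (2 * p)) := by
    rw [← Real.exp_sub]
    congr 1
    rw [hl]
    field_simp
    ring
  calc ((volume : Measure (Fin p → ℝ)) E).toReal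
      ≤ Real.exp ((p : ℝ) * (l ^ 2 / 2)) / Real.exp (l * a) := hm1.trans hm2
    _ = Real.exp (-a ^ 2 / (2 * p)) := hexp


end MedianAux

set_option maxHeartbeats 1000000 in
/-- Concentration of the median-of-absolute-values noise-level estimator
(Proposition 1 of Zhang–Han, 2018). -/
theorem median_noise_estimator_concentration :
    ∃ c C c₀ : ℝ, 0 < c ∧ 0 < C ∧ 0 < c₀ ∧
      ∀ (p : ℕ), 2 ≤ p →
      ∀ σ : ℝ, 0 < σ →
      ∀ (s : ℕ) (X : Fin p → ℝ),
        Set.ncard {i | X i ≠ 0} ≤ s →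
        (s : ℝ) ≤ c₀ * Real.sqrt (p * Real.log p) →
        ∀ z75 : ℝ, gaussianReal 0 1 (Set.Iic z75) = ENNReal.ofReal (3 / 4) →
          ENNReal.ofReal (1 - C / p) ≤
            (Measure.pi fun _ : Fin p => gaussianReal 0 ⟨σ ^ 2, sq_nonneg σ⟩)
              {Z | ∀ mhat : ℝ,
                (p : ℝ) / 2 ≤ ((Finset.univ.filter fun i => |X i + Z i| ≤ mhat).card : ℝ) →
                (p : ℝ) / 2 ≤ ((Finset.univ.filter fun i => mhat ≤ |X i + Z i|).card : ℝ) →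
                |mhat / z75 - σ| ≤ c * σ * Real.sqrt (Real.log p / p)} := by
  obtain ⟨z0, hz0pos, hPhiz0⟩ := MedianAux.exists_z0
  set m : ℝ := gaussianPDFReal 0 1 (2 * z0) with hmdef
  have hmpos : 0 < m := MedianAux.phi_pos _
  set L : ℝ := 2 / m with hLdef
  have hLpos : 0 < L := by positivity
  obtain ⟨n₀, hn₀⟩ := exists_nat_ge ((2 * L ^ 2 / z0 ^ 2) ^ 2)
  refine ⟨L / z0, max 2 ((n₀ : ℝ) + 1), 1, by positivity,
    lt_of_lt_of_le two_pos (le_max_left _ _), one_pos, ?_⟩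
  intro p hp σ hσ s X hsX hsbound z75 hz75
  set C : ℝ := max 2 ((n₀ : ℝ) + 1) with hCdef
  -- identify z75 with z0
  have hPhiz75 : MedianAux.Phi z75 = 3 / 4 := by
    rw [MedianAux.Phi, hz75, ENNReal.toReal_ofReal (by norm_num)]
  have hzeq : z75 = z0 := by
    rcases lt_trichotomy z75 z0 with h | h | h
    · have h2 := MedianAux.Phi_strict h; rw [hPhiz75, hPhiz0] at h2; linarith
    · exact h
    · have h2 := MedianAux.Phi_strict h; rw [hPhiz75, hPhiz0] at h2; linarith
  rw [hzeq]
  -- trivial case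
  by_cases hcase : 1 - C / p ≤ 0
  · rw [ENNReal.ofReal_eq_zero.2 hcase]; exact zero_le
  push_neg at hcase
  have hp0 : (0:ℝ) < p := by exact_mod_cast (by omega : 0 < p)
  have hpne : (p:ℝ) ≠ 0 := hp0.ne'
  have hp2 : (2:ℝ) ≤ p := by exact_mod_cast hp
  have hCp : C < p := by
    by_contra h
    push_neg at h
    have h1 : (1:ℝ) ≤ C / p := (one_le_div hp0).2 h
    linarith
  have hpn₀ : ((2 * L ^ 2 / z0 ^ 2) ^ 2) ≤ (p:ℝ) := by
    have h1 : (n₀ : ℝ) + 1 ≤ C := le_max_right _ _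
    linarith
  have hlogp0 : 0 ≤ Real.log p := Real.log_nonneg (by linarith)
  set ε : ℝ := L * Real.sqrt (Real.log p / p) with hεdef
  have hε0 : 0 ≤ ε := by positivity
  have hsqrtp_pos : 0 < Real.sqrt p := Real.sqrt_pos.2 hp0
  have hlogle : Real.log p ≤ 2 * Real.sqrt p := by
    have h1 : Real.log (Real.sqrt p) ≤ Real.sqrt p - 1 := Real.log_le_sub_one_of_pos hsqrtp_pos
    have h2 : Real.log (Real.sqrt p) = Real.log p / 2 := Real.log_sqrt hp0.le
    linarith
  have hldp : Real.log p / p ≤ 2 / Real.sqrt p := by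
    rw [div_le_div_iff₀ hp0 hsqrtp_pos]
    have h1 : Real.sqrt p * Real.sqrt p = p := Real.mul_self_sqrt hp0.le
    calc Real.log p * Real.sqrt p ≤ (2 * Real.sqrt p) * Real.sqrt p :=
          mul_le_mul_of_nonneg_right hlogle (Real.sqrt_nonneg _)
      _ = 2 * p := by rw [mul_assoc, h1]
  have hsqp_ge : 2 * L ^ 2 / z0 ^ 2 ≤ Real.sqrt p := by
    have h1 := Real.sqrt_le_sqrt hpn₀
    rwa [Real.sqrt_sq (by positivity)] at h1
  have hεz0 : ε ≤ z0 := by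
    have he2 : ε ^ 2 = L ^ 2 * (Real.log p / p) := by
      rw [hεdef, mul_pow, Real.sq_sqrt (by positivity)]
    have h1 : L ^ 2 * (Real.log p / p) ≤ L ^ 2 * (2 / Real.sqrt p) :=
      mul_le_mul_of_nonneg_left hldp (by positivity)
    have h2' : 2 * L ^ 2 ≤ z0 ^ 2 * Real.sqrt p := by
      rw [div_le_iff₀ (by positivity : (0:ℝ) < z0 ^ 2)] at hsqp_ge
      linarith
    have h2 : L ^ 2 * (2 / Real.sqrt p) ≤ z0 ^ 2 := by
      rw [show L ^ 2 * (2 / Real.sqrt p) = 2 * L ^ 2 / Real.sqrt p by ring,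
        div_le_iff₀ hsqrtp_pos]
      linarith [h2']
    have hsq : ε ^ 2 ≤ z0 ^ 2 := by rw [he2]; linarith
    by_contra hlt
    push_neg at hlt
    have : z0 ^ 2 < ε ^ 2 := by
      apply pow_lt_pow_left₀ hlt hz0pos.le
      norm_num
    linarith
  set u₁ : ℝ := z0 - ε with hu₁
  set u₂ : ℝ := z0 + ε with hu₂
  have hu₁0 : 0 ≤ u₁ := by rw [hu₁]; linarith
  have hu₂0 : 0 < u₂ := by rw [hu₂]; linarith
  set t₁ : ℝ := σ * u₁ with ht₁def
  set t₂ : ℝ := σ * u₂ with ht₂def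
  have hphi_lb : ∀ x ∈ Icc (0:ℝ) (2 * z0), m ≤ gaussianPDFReal 0 1 x := by
    intro x hx
    apply MedianAux.phi_anti
    rw [abs_of_nonneg hx.1, abs_of_nonneg (by linarith : (0:ℝ) ≤ 2 * z0)]
    exact hx.2
  have hintegrable : ∀ a b : ℝ, IntervalIntegrable (gaussianPDFReal 0 1) volume a b :=
    fun _ _ => (integrable_gaussianPDFReal 0 1).intervalIntegrable
  have hPhiu₁ : MedianAux.Phi u₁ ≤ 3 / 4 - ε * m := by
    have hdiff := MedianAux.Phi_diff (a := u₁) (b := z0) (by rw [hu₁]; linarith)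
    have hmono := intervalIntegral.integral_mono_on (by rw [hu₁]; linarith : u₁ ≤ z0)
      (intervalIntegrable_const (c := m)) (hintegrable u₁ z0)
      (fun x hx => hphi_lb x ⟨by linarith [hx.1, hu₁0], by linarith [hx.2, hz0pos]⟩)
    rw [intervalIntegral.integral_const, smul_eq_mul] at hmono
    have hεe : ε * m ≤ ∫ x in u₁..z0, gaussianPDFReal 0 1 x := by
      calc ε * m = (z0 - u₁) * m := by rw [hu₁]; ring
        _ ≤ _ := hmono
    rw [hPhiz0] at hdiff
    linarith
  have hPhiu₂ : 3 / 4 + ε * m ≤ MedianAux.Phi u₂ := by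
    have hdiff := MedianAux.Phi_diff (a := z0) (b := u₂) (by rw [hu₂]; linarith)
    have hmono := intervalIntegral.integral_mono_on (by rw [hu₂]; linarith : z0 ≤ u₂)
      (intervalIntegrable_const (c := m)) (hintegrable z0 u₂)
      (fun x hx => hphi_lb x ⟨by linarith [hx.1, hz0pos], by
        have h2 : x ≤ u₂ := hx.2
        have h3 : u₂ ≤ 2 * z0 := by rw [hu₂]; linarith
        linarith⟩)
    rw [intervalIntegral.integral_const, smul_eq_mul] at hmono
    have hεe : ε * m ≤ ∫ x in z0..u₂, gaussianPDFReal 0 1 x := by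
      calc ε * m = (u₂ - z0) * m := by rw [hu₂]; ring
        _ ≤ _ := hmono
    rw [hPhiz0] at hdiff
    linarith
  have hPhiu₁_ge : 1 / 2 ≤ MedianAux.Phi u₁ := by
    have h1 := MedianAux.Phi_mono hu₁0
    rwa [MedianAux.Phi_zero] at h1
  have h2em : 2 * (ε * m) ≤ 1 / 2 := by linarith
  set ν : Measure ℝ := gaussianReal 0 ⟨σ ^ 2, sq_nonneg σ⟩ with hνdef
  haveI hprobν : IsProbabilityMeasure ν := by rw [hνdef]; exact instIsProbabilityMeasureGaussianReal _ _
  have hprob_le : ∀ S : Set ℝ, (ν S).toReal ≤ 1 := by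
    intro S
    have h := prob_le_one (μ := ν) (s := S)
    calc (ν S).toReal ≤ (1 : ℝ≥0∞).toReal := ENNReal.toReal_mono ENNReal.one_ne_top h
      _ = 1 := ENNReal.toReal_one
  have habs_meas : ∀ r : ℝ, Measurable fun x : ℝ => |r + x| := fun r => by fun_prop
  have hq1bound : ∀ i : Fin p, X i = 0 →
      (ν {x | |X i + x| ≤ t₁}).toReal ≤ 1 / 2 - 2 * (ε * m) := by
    intro i hXi
    have hSmeas : MeasurableSet {x : ℝ | |X i + x| ≤ t₁} :=
      measurableSet_le (habs_meas (X i)) measurable_const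
    rw [hνdef, MedianAux.gauss_scale hσ _ hSmeas]
    have hpre : (fun x : ℝ => σ * x) ⁻¹' {x | |X i + x| ≤ t₁} = Icc (-u₁) u₁ := by
      ext y
      simp only [Set.mem_preimage, Set.mem_setOf_eq, hXi, zero_add, Set.mem_Icc]
      rw [ht₁def, abs_mul, abs_of_pos hσ, mul_le_mul_iff_of_pos_left hσ, abs_le]
    rw [hpre, MedianAux.gauss_Icc hu₁0]
    linarith
  have hq2bound : ∀ i : Fin p, X i = 0 →
      (ν {x | t₂ ≤ |X i + x|}).toReal ≤ 1 / 2 - 2 * (ε * m) := by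
    intro i hXi
    have hSmeas : MeasurableSet {x : ℝ | t₂ ≤ |X i + x|} :=
      measurableSet_le measurable_const (habs_meas (X i))
    rw [hνdef, MedianAux.gauss_scale hσ _ hSmeas]
    have hpre : (fun x : ℝ => σ * x) ⁻¹' {x | t₂ ≤ |X i + x|} = Iic (-u₂) ∪ Ici u₂ := by
      ext y
      simp only [Set.mem_preimage, Set.mem_setOf_eq, hXi, zero_add, Set.mem_union,
        Set.mem_Iic, Set.mem_Ici]
      rw [ht₂def, abs_mul, abs_of_pos hσ, mul_le_mul_iff_of_pos_left hσ, le_abs]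
      constructor
      · rintro (h | h)
        · exact Or.inr h
        · exact Or.inl (by linarith)
      · rintro (h | h)
        · exact Or.inr (by linarith)
        · exact Or.inl h
    rw [hpre, MedianAux.gauss_two_tails hu₂0]
    linarith
  have hscard : ((Finset.univ.filter fun i : Fin p => ¬ X i = 0).card : ℝ) ≤ s := by
    have hset : {i : Fin p | X i ≠ 0} = ↑(Finset.univ.filter fun i : Fin p => ¬ X i = 0) := by
      ext i; simp
    rw [hset, Set.ncard_coe_finset] at hsX
    exact_mod_cast hsX
  have hsum_bound : ∀ Q : Fin p → Set ℝ,
      (∀ i, X i = 0 → (ν (Q i)).toReal ≤ 1 / 2 - 2 * (ε * m)) →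
      ∑ i, (ν (Q i)).toReal ≤ (p : ℝ) * (1 / 2 - 2 * (ε * m)) + s := by
    intro Q hQ
    have hterm : ∀ i ∈ Finset.univ, (ν (Q i)).toReal
        ≤ (1 / 2 - 2 * (ε * m)) + (if X i = 0 then 0 else 1) := by
      intro i _
      by_cases h : X i = 0
      · rw [if_pos h, add_zero]; exact hQ i h
      · rw [if_neg h]
        have h1 := hprob_le (Q i)
        linarith
    calc ∑ i, (ν (Q i)).toReal
        ≤ ∑ i : Fin p, ((1 / 2 - 2 * (ε * m)) + (if X i = 0 then (0:ℝ) else 1)) :=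
          Finset.sum_le_sum hterm
      _ = (p : ℝ) * (1 / 2 - 2 * (ε * m)) + ∑ i : Fin p, (if X i = 0 then (0:ℝ) else 1) := by
          rw [Finset.sum_add_distrib, Finset.sum_const, Finset.card_univ, Fintype.card_fin,
            nsmul_eq_mul]
      _ ≤ _ := by
          have heq : ∑ i : Fin p, (if X i = 0 then (0:ℝ) else 1)
              = ((Finset.univ.filter fun i : Fin p => ¬ X i = 0).card : ℝ) := by
            rw [Finset.card_filter]
            push_cast
            exact Finset.sum_congr rfl fun i _ => by by_cases h : X i = 0 <;> simp [h]
          rw [heq]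
          linarith
  set a : ℝ := Real.sqrt (2 * ((p:ℝ) * Real.log p)) with hadef
  have ha0 : 0 ≤ a := Real.sqrt_nonneg _
  have hsqrtid : Real.sqrt (Real.log p / p) * p = Real.sqrt ((p:ℝ) * Real.log p) := by
    rw [show (p:ℝ) * Real.log p = (Real.log p / p) * (p:ℝ) ^ 2 by field_simp,
      Real.sqrt_mul (by positivity : (0:ℝ) ≤ Real.log p / p), Real.sqrt_sq hp0.le]
  have ha2 : a ^ 2 = 2 * ((p:ℝ) * Real.log p) := Real.sq_sqrt (by positivity)
  have hsqrt2 : Real.sqrt 2 ≤ 2 := by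
    have h4 : Real.sqrt 4 = 2 := by
      rw [show (4:ℝ) = 2 ^ 2 by norm_num, Real.sqrt_sq (by norm_num : (0:ℝ) ≤ 2)]
    calc Real.sqrt 2 ≤ Real.sqrt 4 := Real.sqrt_le_sqrt (by norm_num)
      _ = 2 := h4
  have ha_split : a = Real.sqrt 2 * Real.sqrt ((p:ℝ) * Real.log p) := by
    rw [hadef, Real.sqrt_mul (by norm_num : (0:ℝ) ≤ 2)]
  have hεp : ε * (p:ℝ) = L * Real.sqrt ((p:ℝ) * Real.log p) := by
    rw [hεdef, mul_assoc, hsqrtid]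
  have h1key : 2 * (ε * m) * (p:ℝ) = 4 * Real.sqrt ((p:ℝ) * Real.log p) := by
    rw [show 2 * (ε * m) * (p:ℝ) = 2 * m * (ε * (p:ℝ)) by ring, hεp, hLdef]
    field_simp
    ring
  have hsle : (s:ℝ) ≤ Real.sqrt ((p:ℝ) * Real.log p) := by
    calc (s:ℝ) ≤ 1 * Real.sqrt ((p:ℝ) * Real.log p) := hsbound
      _ = _ := one_mul _
  have hkey : (p:ℝ) * (1 / 2 - 2 * (ε * m)) + (s:ℝ) + a ≤ (p:ℝ) / 2 := by
    have hsqrt_nn : 0 ≤ Real.sqrt ((p:ℝ) * Real.log p) := Real.sqrt_nonneg _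
    have ha_le : a ≤ 2 * Real.sqrt ((p:ℝ) * Real.log p) := by
      rw [ha_split]
      exact mul_le_mul_of_nonneg_right hsqrt2 hsqrt_nn
    linarith [h1key, hsle, ha_le, hsqrt_nn]
  have hexp1p : ENNReal.ofReal (Real.exp (-a ^ 2 / (2 * p))) = ENNReal.ofReal (1 / (p:ℝ)) := by
    congr 1
    rw [ha2, show -(2 * ((p:ℝ) * Real.log p)) / (2 * (p:ℝ)) = -Real.log p by field_simp,
      Real.exp_neg, Real.exp_log hp0, one_div]
  have hchern1 := MedianAux.chernoff ν (by omega : 0 < p)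
    (fun i x => |X i + x| ≤ t₁)
    (fun i => measurableSet_le (habs_meas (X i)) measurable_const) ha0
  have hchern2 := MedianAux.chernoff ν (by omega : 0 < p)
    (fun i x => t₂ ≤ |X i + x|)
    (fun i => measurableSet_le measurable_const (habs_meas (X i))) ha0
  set μp := Measure.pi fun _ : Fin p => ν with hμpdef
  set S₁ : Set (Fin p → ℝ) :=
    {z | (p:ℝ) / 2 ≤ ((Finset.univ.filter fun i => |X i + z i| ≤ t₁).card : ℝ)} with hS₁def
  set S₂ : Set (Fin p → ℝ) :=
    {z | (p:ℝ) / 2 ≤ ((Finset.univ.filter fun i => t₂ ≤ |X i + z i|).card : ℝ)} with hS₂def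
  have hbad1 : μp S₁ ≤ ENNReal.ofReal (1 / (p:ℝ)) := by
    refine le_trans (measure_mono ?_) (le_trans hchern1 (le_of_eq hexp1p))
    intro z hz
    simp only [hS₁def, Set.mem_setOf_eq] at hz ⊢
    have hsum := hsum_bound (fun i => {x | |X i + x| ≤ t₁}) hq1bound
    linarith
  have hbad2 : μp S₂ ≤ ENNReal.ofReal (1 / (p:ℝ)) := by
    refine le_trans (measure_mono ?_) (le_trans hchern2 (le_of_eq hexp1p))
    intro z hz
    simp only [hS₂def, Set.mem_setOf_eq] at hz ⊢
    have hsum := hsum_bound (fun i => {x | t₂ ≤ |X i + x|}) hq2bound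
    linarith
  have hcover : (1:ℝ≥0∞) ≤ μp (S₁ᶜ ∩ S₂ᶜ) + ENNReal.ofReal (2 / (p:ℝ)) := by
    have huniv : (Set.univ : Set (Fin p → ℝ)) ⊆ (S₁ᶜ ∩ S₂ᶜ) ∪ (S₁ ∪ S₂) := by
      intro z _
      by_cases h1 : z ∈ S₁
      · exact Or.inr (Or.inl h1)
      by_cases h2 : z ∈ S₂
      · exact Or.inr (Or.inr h2)
      exact Or.inl ⟨h1, h2⟩
    have h2p : ENNReal.ofReal (1/(p:ℝ)) + ENNReal.ofReal (1/(p:ℝ))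
        = ENNReal.ofReal (2/(p:ℝ)) := by
      rw [← ENNReal.ofReal_add (by positivity) (by positivity)]
      congr 1
      ring
    calc (1:ℝ≥0∞) = μp Set.univ := measure_univ.symm
      _ ≤ μp ((S₁ᶜ ∩ S₂ᶜ) ∪ (S₁ ∪ S₂)) := measure_mono huniv
      _ ≤ μp (S₁ᶜ ∩ S₂ᶜ) + μp (S₁ ∪ S₂) := measure_union_le _ _
      _ ≤ μp (S₁ᶜ ∩ S₂ᶜ) + (μp S₁ + μp S₂) := add_le_add_right (measure_union_le _ _) _
      _ ≤ μp (S₁ᶜ ∩ S₂ᶜ) + ENNReal.ofReal (2/(p:ℝ)) := by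
          rw [← h2p]
          exact add_le_add_right (add_le_add hbad1 hbad2) _
  have hfinal : ENNReal.ofReal (1 - C / (p:ℝ)) ≤ μp (S₁ᶜ ∩ S₂ᶜ) := by
    have h2C : (2:ℝ) ≤ C := le_max_left _ _
    have hdiv : 2 / (p:ℝ) ≤ C / (p:ℝ) := by gcongr
    calc ENNReal.ofReal (1 - C / (p:ℝ))
        ≤ ENNReal.ofReal (1 - 2 / (p:ℝ)) := ENNReal.ofReal_le_ofReal (by linarith)
      _ = 1 - ENNReal.ofReal (2 / (p:ℝ)) := by
          rw [ENNReal.ofReal_sub _ (by positivity), ENNReal.ofReal_one]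
      _ ≤ μp (S₁ᶜ ∩ S₂ᶜ) := tsub_le_iff_right.2 hcover
  refine hfinal.trans (measure_mono ?_)
  rintro z ⟨hz1, hz2⟩ mhat h1 h2
  simp only [hS₁def, Set.mem_compl_iff, Set.mem_setOf_eq, not_le] at hz1
  simp only [hS₂def, Set.mem_compl_iff, Set.mem_setOf_eq, not_le] at hz2
  have hmh1 : t₁ < mhat := by
    by_contra h
    push_neg at h
    have hss : (Finset.univ.filter fun i => |X i + z i| ≤ mhat)
        ⊆ (Finset.univ.filter fun i => |X i + z i| ≤ t₁) := by
      intro i hi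
      simp only [Finset.mem_filter] at hi ⊢
      exact ⟨hi.1, hi.2.trans h⟩
    have hc := Finset.card_le_card hss
    have hc' : ((Finset.univ.filter fun i => |X i + z i| ≤ mhat).card : ℝ)
        ≤ ((Finset.univ.filter fun i => |X i + z i| ≤ t₁).card : ℝ) := by exact_mod_cast hc
    linarith
  have hmh2 : mhat < t₂ := by
    by_contra h
    push_neg at h
    have hss : (Finset.univ.filter fun i => mhat ≤ |X i + z i|)
        ⊆ (Finset.univ.filter fun i => t₂ ≤ |X i + z i|) := by
      intro i hi
      simp only [Finset.mem_filter] at hi ⊢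
      exact ⟨hi.1, h.trans hi.2⟩
    have hc := Finset.card_le_card hss
    have hc' : ((Finset.univ.filter fun i => mhat ≤ |X i + z i|).card : ℝ)
        ≤ ((Finset.univ.filter fun i => t₂ ≤ |X i + z i|).card : ℝ) := by exact_mod_cast hc
    linarith
  have he1 : t₁ = σ * z0 - σ * ε := by rw [ht₁def, hu₁]; ring
  have he2 : t₂ = σ * z0 + σ * ε := by rw [ht₂def, hu₂]; ring
  have heq : mhat / z0 - σ = (mhat - σ * z0) / z0 := by field_simp
  have hrhs : L / z0 * σ * Real.sqrt (Real.log p / p) = (σ * ε) / z0 := by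
    rw [hεdef]
    field_simp
  rw [heq, hrhs, abs_div, abs_of_pos hz0pos]
  gcongr
  rw [abs_le]
  constructor <;> linarith

end
end

section
/- Orthogonal complement of a Kronecker product of orthonormal matrices. Let d ≥ 1 and for each l = 1,…,d let U_l ∈ ℝ^{p_l×r_l} with U_lᵀU_l = I_{r_l} (so r_l ≤ p_l), and let U_{l⊥} ∈ ℝ^{p_l×(p_l−r_l)} satisfy U_{l⊥}ᵀU_{l⊥} = I_{p_l−r_l} and U_lᵀU_{l⊥} = 0. Then the (∏_l p_l)×(∏_l p_l) block matrix W obtained by concatenating the columns of the d+1 matrices U_1⊗U_2⊗⋯⊗U_d, U_{1⊥}⊗I_{p_2}⊗⋯⊗I_{p_d}, U_1⊗U_{2⊥}⊗I_{p_3}⊗⋯⊗I_{p_d}, …, U_1⊗⋯⊗U_{d−1}⊗U_{d⊥} satisfies WᵀW = I; in particular the columns of the last d blocks form an orthonormal complement of the column space of U_1⊗⋯⊗U_d. -/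
/-!
Every column of `W` is a Kronecker product `w_1 ⊗ ⋯ ⊗ w_d` of one column per mode, taken from
`U_m`, `U_{m⊥}` or `I_{p_m}`, so the inner product of two columns is the product over the modes
of the inner products of their factors. Two columns of the same block have factors taken from
the same matrices, each with orthonormal columns, giving a Kronecker delta. For columns of
different blocks `l < l'` (the block of `U_1 ⊗ ⋯ ⊗ U_d` counting as `l' = ∞`), the mode-`l`
factors are a column of `U_{l⊥}` and a column of `U_l`, which are orthogonal.
-/

open Matrix BigOperators

noncomputable section

/-- Column count of the `l`-th complementary Kronecker block
`U_1 ⊗ ⋯ ⊗ U_{l−1} ⊗ U_{l⊥} ⊗ I_{p_{l+1}} ⊗ ⋯ ⊗ I_{p_d}` in mode `m`. -/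
def blockDim {d : ℕ} (p r : Fin d → ℕ) (l m : Fin d) : ℕ :=
  if m < l then r m else if m = l then p m - r m else p m

/-- The `l`-th complementary Kronecker block
`U_1 ⊗ ⋯ ⊗ U_{l−1} ⊗ U_{l⊥} ⊗ I_{p_{l+1}} ⊗ ⋯ ⊗ I_{p_d}`. -/
def lowerBlock {d : ℕ} {p r : Fin d → ℕ}
    (U : ∀ l, Matrix (Fin (p l)) (Fin (r l)) ℝ)
    (Uperp : ∀ l, Matrix (Fin (p l)) (Fin (p l - r l)) ℝ) (l : Fin d) :
    Matrix (∀ m, Fin (p m)) (∀ m, Fin (blockDim p r l m)) ℝ :=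
  fun i j => ∏ m,
    if h : m < l then U m (i m) (Fin.cast (by simp [blockDim, h]) (j m))
    else if h2 : m = l then Uperp m (i m) (Fin.cast (by simp [blockDim, h, h2]) (j m))
    else if i m = Fin.cast (by simp [blockDim, h, h2]) (j m) then (1 : ℝ) else 0

/-- The full block matrix `W = [U_1⊗⋯⊗U_d | block_1 | ⋯ | block_d]`. -/
def bigW {d : ℕ} {p r : Fin d → ℕ}
    (U : ∀ l, Matrix (Fin (p l)) (Fin (r l)) ℝ)
    (Uperp : ∀ l, Matrix (Fin (p l)) (Fin (p l - r l)) ℝ) :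
    Matrix (∀ m, Fin (p m))
      ((∀ m, Fin (r m)) ⊕ (Σ l : Fin d, ∀ m, Fin (blockDim p r l m))) ℝ :=
  fun i c =>
    match c with
    | Sum.inl j => ∏ m, U m (i m) (j m)
    | Sum.inr ⟨l, j⟩ => lowerBlock U Uperp l i j

theorem Matrix.transpose_apply_dotProduct_transpose_apply {k m n R : Type*} [Fintype k]
    [Mul R] [AddCommMonoid R] (A : Matrix k m R) (B : Matrix k n R) (a : m) (b : n) :
    Aᵀ a ⬝ᵥ Bᵀ b = (Aᵀ * B) a b := by
  rw [mul_apply']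
  rfl

theorem Matrix.dotProduct_prod_eq_prod_dotProduct {ι R : Type*} [Fintype ι] [DecidableEq ι]
    [CommSemiring R] {κ : ι → Type*} [∀ m, Fintype (κ m)] (f g : ∀ m, κ m → R) :
    (fun x : ∀ m, κ m => ∏ m, f m (x m)) ⬝ᵥ (fun x => ∏ m, g m (x m)) = ∏ m, f m ⬝ᵥ g m := by
  simp only [dotProduct, Fintype.prod_sum, ← Finset.prod_mul_distrib]

theorem Fintype.prod_ite_apply_eq_apply {ι R : Type*} [Fintype ι] [CommMonoidWithZero R]
    {κ : ι → Type*} [∀ m, DecidableEq (κ m)] [DecidableEq (∀ m, κ m)] (j j' : ∀ m, κ m) :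
    ∏ m, (if j m = j' m then (1 : R) else 0) = if j = j' then 1 else 0 := by
  simp only [Fintype.prod_boole, ← funext_iff]

theorem Matrix.transpose_apply_cast_dotProduct_transpose_apply_cast {n R : Type*} [Fintype n]
    [NonAssocSemiring R] {k k' : ℕ} (A : Matrix n (Fin k') R) (hA : Aᵀ * A = 1) (h : k = k')
    (a b : Fin k) : Aᵀ (a.cast h) ⬝ᵥ Aᵀ (b.cast h) = if a = b then 1 else 0 := by
  rw [transpose_apply_dotProduct_transpose_apply, hA, one_apply]
  simp only [Fin.cast_inj]

namespace KroneckerComplement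

variable {d : ℕ} {p r : Fin d → ℕ}

abbrev ColIdx (p r : Fin d → ℕ) :=
  (∀ m, Fin (r m)) ⊕ (Σ l : Fin d, ∀ m, Fin (blockDim p r l m))

def block : ColIdx p r → WithTop (Fin d)
  | Sum.inl _ => ⊤
  | Sum.inr ⟨l, _⟩ => l

variable (U : ∀ l, Matrix (Fin (p l)) (Fin (r l)) ℝ)
    (Uperp : ∀ l, Matrix (Fin (p l)) (Fin (p l - r l)) ℝ)

def modeCol : ColIdx p r → ∀ m, Fin (p m) → ℝ
  | Sum.inl j, m => (U m)ᵀ (j m)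
  | Sum.inr ⟨l, j⟩, m =>
    if h : m < l then (U m)ᵀ (Fin.cast (by rw [blockDim, if_pos h]) (j m))
    else if h2 : m = l then (Uperp m)ᵀ (Fin.cast (by rw [blockDim, if_neg h, if_pos h2]) (j m))
    else Pi.single (Fin.cast (by rw [blockDim, if_neg h, if_neg h2]) (j m)) 1

theorem bigW_apply (i : ∀ m, Fin (p m)) (c : ColIdx p r) :
    bigW U Uperp i c = ∏ m, modeCol U Uperp c m (i m) := by
  obtain j | ⟨l, j⟩ := c
  · rfl
  · simp only [bigW, lowerBlock]
    refine Finset.prod_congr rfl fun m _ => ?_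
    by_cases hlt : m < l
    · simp only [modeCol, dif_pos hlt, transpose_apply]
    by_cases heq : m = l
    · simp only [modeCol, dif_neg hlt, dif_pos heq, transpose_apply]
    · simp only [modeCol, dif_neg hlt, dif_neg heq, Pi.single_apply]

theorem transpose_bigW_mul_bigW_apply (c c' : ColIdx p r) :
    ((bigW U Uperp)ᵀ * bigW U Uperp) c c' =
      ∏ m, modeCol U Uperp c m ⬝ᵥ modeCol U Uperp c' m := by
  rw [← transpose_apply_dotProduct_transpose_apply,
    ← dotProduct_prod_eq_prod_dotProduct (modeCol U Uperp c) (modeCol U Uperp c')]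
  congr 1 <;> ext i <;> exact bigW_apply U Uperp i _

variable {U Uperp}

theorem modeCol_mem_range_U {c : ColIdx p r} {m : Fin d} (h : (m : WithTop (Fin d)) < block c) :
    modeCol U Uperp c m ∈ Set.range (U m)ᵀ := by
  obtain j | ⟨l, j⟩ := c
  · exact ⟨j m, rfl⟩
  · have hlt : m < l := WithTop.coe_lt_coe.mp h
    simp only [modeCol, dif_pos hlt]
    exact ⟨_, rfl⟩

theorem modeCol_mem_range_Uperp {c : ColIdx p r} {m : Fin d} (h : block c = m) :
    modeCol U Uperp c m ∈ Set.range (Uperp m)ᵀ := by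
  obtain j | ⟨l, j⟩ := c
  · exact absurd h WithTop.top_ne_coe
  · obtain rfl : l = m := WithTop.coe_inj.mp h
    simp only [modeCol, dif_neg (lt_irrefl l)]
    exact ⟨_, rfl⟩

theorem prod_dotProduct_modeCol_eq_zero (hUo : ∀ l, (U l)ᵀ * Uperp l = 0) {c c' : ColIdx p r}
    (h : block c ≠ block c') : ∏ m, modeCol U Uperp c m ⬝ᵥ modeCol U Uperp c' m = 0 := by
  wlog hlt : block c < block c' generalizing c c'
  · rw [Finset.prod_congr rfl fun m _ => dotProduct_comm _ _]
    exact this h.symm (lt_of_le_of_ne (not_lt.mp hlt) h.symm)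
  obtain ⟨l, hl⟩ := WithTop.ne_top_iff_exists.mp (hlt.trans_le le_top).ne
  obtain ⟨a, ha⟩ := modeCol_mem_range_Uperp (U := U) hl.symm
  obtain ⟨b, hb⟩ := modeCol_mem_range_U (Uperp := Uperp) (hl ▸ hlt)
  refine Finset.prod_eq_zero (Finset.mem_univ l) ?_
  rw [← ha, ← hb, dotProduct_comm, transpose_apply_dotProduct_transpose_apply, hUo,
    Matrix.zero_apply]

theorem dotProduct_modeCol_inr (hU : ∀ l, (U l)ᵀ * U l = 1)
    (hUperp : ∀ l, (Uperp l)ᵀ * Uperp l = 1) (l m : Fin d) (j j' : ∀ m, Fin (blockDim p r l m)) :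
    modeCol U Uperp (Sum.inr ⟨l, j⟩) m ⬝ᵥ modeCol U Uperp (Sum.inr ⟨l, j'⟩) m =
      if j m = j' m then 1 else 0 := by
  by_cases hlt : m < l
  · simp only [modeCol, dif_pos hlt]
    exact transpose_apply_cast_dotProduct_transpose_apply_cast _ (hU m) _ _ _
  by_cases heq : m = l
  · simp only [modeCol, dif_neg hlt, dif_pos heq]
    exact transpose_apply_cast_dotProduct_transpose_apply_cast _ (hUperp m) _ _ _
  · simp only [modeCol, dif_neg hlt, dif_neg heq, single_dotProduct, Pi.single_apply,
      Fin.cast_inj, one_mul]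

theorem prod_dotProduct_modeCol_of_block_eq (hU : ∀ l, (U l)ᵀ * U l = 1)
    (hUperp : ∀ l, (Uperp l)ᵀ * Uperp l = 1) {c c' : ColIdx p r} (h : block c = block c') :
    ∏ m, modeCol U Uperp c m ⬝ᵥ modeCol U Uperp c' m = if c = c' then 1 else 0 := by
  obtain j | ⟨l, j⟩ := c <;> obtain j' | ⟨l', j'⟩ := c'
  · simp only [modeCol, transpose_apply_dotProduct_transpose_apply, hU, one_apply,
      Fintype.prod_ite_apply_eq_apply, Sum.inl.injEq]
  · exact absurd h WithTop.top_ne_coe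
  · exact absurd h WithTop.coe_ne_top
  · obtain rfl : l = l' := WithTop.coe_inj.mp h
    simp only [dotProduct_modeCol_inr hU hUperp, Fintype.prod_ite_apply_eq_apply, Sum.inr.injEq,
      Sigma.mk.inj_iff, heq_eq_eq, true_and]

end KroneckerComplement

theorem orth_complement_of_kronecker_general {d : ℕ} {p r : Fin d → ℕ}
    (U : ∀ l, Matrix (Fin (p l)) (Fin (r l)) ℝ)
    (Uperp : ∀ l, Matrix (Fin (p l)) (Fin (p l - r l)) ℝ)
    (hU : ∀ l, (U l)ᵀ * U l = 1)
    (hUperp : ∀ l, (Uperp l)ᵀ * Uperp l = 1)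
    (hUo : ∀ l, (U l)ᵀ * Uperp l = 0) :
    (bigW U Uperp)ᵀ * bigW U Uperp = 1 := by
  open KroneckerComplement in
  ext c c'
  rw [transpose_bigW_mul_bigW_apply, one_apply]
  by_cases h : block c = block c'
  · exact prod_dotProduct_modeCol_of_block_eq hU hUperp h
  · rw [prod_dotProduct_modeCol_eq_zero hUo h, if_neg (fun hc => h (congrArg block hc))]

/-- Orthogonal complement of a Kronecker product of orthonormal matrices
(second part of Lemma 1 of Zhang–Han, 2018): the block matrix `W` consisting of
`U_1⊗⋯⊗U_d` together with the `d` complementary blocks is orthogonal. -/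
theorem orth_complement_of_kronecker {d : ℕ} (hd : 1 ≤ d) {p r : Fin d → ℕ}
    (U : ∀ l, Matrix (Fin (p l)) (Fin (r l)) ℝ)
    (Uperp : ∀ l, Matrix (Fin (p l)) (Fin (p l - r l)) ℝ)
    (hU : ∀ l, (U l)ᵀ * U l = 1)
    (hUperp : ∀ l, (Uperp l)ᵀ * Uperp l = 1)
    (hUo : ∀ l, (U l)ᵀ * Uperp l = 0) :
    (bigW U Uperp)ᵀ * bigW U Uperp = 1 :=
  orth_complement_of_kronecker_general U Uperp hU hUperp hUo

end
end

section
/- Frobenius-norm bound for the residual of a multilinear projection. Let X be an order-d tensor of dimensions p_1×⋯×p_d with d ≥ 2, and for each l = 2,…,d let U_l ∈ ℝ^{p_l×r_l} satisfy U_lᵀU_l = I_{r_l}. Let W be any real matrix with ∏_{l≥2} p_l rows such that WᵀW = I and (U_2⊗U_3⊗⋯⊗U_d)ᵀ W = 0 (its columns are orthonormal and orthogonal to the columns of U_2⊗⋯⊗U_d). Then ‖M_1(X)·W‖_F² ≤ Σ_{l=2}^d ( ‖X‖_F² − ‖U_lᵀ M_l(X)‖_F² ). -/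
/-!
Write `A = M_1(X)` and `K = U_2 ⊗ ⋯ ⊗ U_d`. Since the columns of `W` are orthonormal and
orthogonal to those of `K`, `W Wᵀ ≤ I - K Kᵀ` as projections, so `‖A W‖² ≤ ‖A (I - K Kᵀ)‖²`.
Now `K Kᵀ` is the product of the commuting projections `Eₗ = I ⊗ ⋯ ⊗ Uₗ Uₗᵀ ⊗ ⋯ ⊗ I`, and
splitting `I - Eₗ E = (I - Eₗ) + Eₗ (I - E)` orthogonally gives by induction
`‖A (I - ∏ Eₗ)‖² ≤ ∑ ‖A (I - Eₗ)‖² = ∑ (‖X‖² - ‖A Eₗ‖²)`. Finally `A Eₗ` is a matricization of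
the tensor `X ×ₗ Uₗ Uₗᵀ`, whose mode-`l` matricization is `Uₗ Uₗᵀ M_l(X)`, of norm
`‖Uₗᵀ M_l(X)‖`.
-/

open Matrix BigOperators

noncomputable section

/-- Squared Frobenius norm of a matrix. -/
def mfrobSq {ι κ : Type*} [Fintype ι] [Fintype κ] (A : Matrix ι κ ℝ) : ℝ :=
  ∑ i, ∑ j, A i j ^ 2

/-- Assemble a full tensor index from a mode-`k` index and the remaining indices. -/
def mergeIdx {d : ℕ} (p : Fin d → ℕ) (k : Fin d) (i : Fin (p k))
    (j : ∀ l : {l : Fin d // l ≠ k}, Fin (p l.1)) : TIdx p :=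
  fun l => if h : l = k then Fin.cast (congrArg p h.symm) i else j ⟨l, h⟩

/-- Mode-`k` matricization of a tensor. -/
def matricize {d : ℕ} {p : Fin d → ℕ} (k : Fin d) (X : TIdx p → ℝ) :
    Matrix (Fin (p k)) (∀ l : {l : Fin d // l ≠ k}, Fin (p l.1)) ℝ :=
  fun i j => X (mergeIdx p k i j)

/-- Kronecker product of a finite family of matrices. -/
def kron {ι : Type*} [Fintype ι] {m n : ι → ℕ}
    (V : ∀ l, Matrix (Fin (m l)) (Fin (n l)) ℝ) :
    Matrix (∀ l, Fin (m l)) (∀ l, Fin (n l)) ℝ :=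
  fun i j => ∏ l, V l (i l) (j l)

open Function

section Projection

variable {m n : Type*} [Fintype m] [Fintype n]

lemma mfrobSq_nonneg (A : Matrix m n ℝ) : 0 ≤ mfrobSq A :=
  Finset.sum_nonneg fun _ _ => Finset.sum_nonneg fun _ _ => sq_nonneg _

lemma mfrobSq_eq_trace (A : Matrix m n ℝ) : mfrobSq A = (Aᵀ * A).trace := by
  simp only [mfrobSq, trace, diag, mul_apply, transpose_apply, sq]
  exact Finset.sum_comm

lemma mfrobSq_mul_of_transpose_mul_self {r : Type*} [Fintype r] [DecidableEq r]
    {V : Matrix m r ℝ} (hV : Vᵀ * V = 1) (B : Matrix r n ℝ) : mfrobSq (V * B) = mfrobSq B := by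
  rw [mfrobSq_eq_trace, mfrobSq_eq_trace, transpose_mul, Matrix.mul_assoc,
    ← Matrix.mul_assoc Vᵀ, hV, Matrix.one_mul]

lemma isStarProjection_iff_transpose {P : Matrix n n ℝ} :
    IsStarProjection P ↔ P * P = P ∧ Pᵀ = P := by
  rw [isStarProjection_iff, IsIdempotentElem, IsSelfAdjoint, star_eq_conjTranspose,
    conjTranspose_eq_transpose_of_trivial]

lemma isStarProjection_mul_transpose {κ : Type*} [Fintype κ] [DecidableEq κ]
    {W : Matrix n κ ℝ} (hW : Wᵀ * W = 1) : IsStarProjection (W * Wᵀ) := by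
  refine isStarProjection_iff_transpose.mpr ⟨?_, by rw [transpose_mul, transpose_transpose]⟩
  rw [Matrix.mul_assoc, ← Matrix.mul_assoc Wᵀ, hW, Matrix.one_mul]

lemma mfrobSq_mul_eq_trace (A : Matrix m n ℝ) {P : Matrix n n ℝ} (hP : IsStarProjection P) :
    mfrobSq (A * P) = (Aᵀ * A * P).trace := by
  obtain ⟨hPP, hPt⟩ := isStarProjection_iff_transpose.mp hP
  rw [mfrobSq_eq_trace, transpose_mul, hPt, Matrix.mul_assoc, trace_mul_comm]
  simp only [← Matrix.mul_assoc]
  rw [Matrix.mul_assoc (Aᵀ * A), hPP]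

lemma mfrobSq_mul_add (A : Matrix m n ℝ) {P Q : Matrix n n ℝ} (hP : IsStarProjection P)
    (hQ : IsStarProjection Q) (hPQ : P * Q = 0) :
    mfrobSq (A * (P + Q)) = mfrobSq (A * P) + mfrobSq (A * Q) := by
  rw [mfrobSq_mul_eq_trace A (hP.add hQ hPQ), mfrobSq_mul_eq_trace A hP,
    mfrobSq_mul_eq_trace A hQ, Matrix.mul_add, trace_add]

lemma mfrobSq_mul_le_of_mul_eq (A : Matrix m n ℝ) {P Q : Matrix n n ℝ}
    (hP : IsStarProjection P) (hQ : IsStarProjection Q) (hPQ : P * Q = P) :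
    mfrobSq (A * P) ≤ mfrobSq (A * Q) := by
  have h := mfrobSq_mul_add A hP (hP.sub_of_mul_eq_left hQ hPQ)
    (by rw [Matrix.mul_sub, hPQ, hP.isIdempotentElem.eq, sub_self])
  rw [add_sub_cancel] at h
  linarith [mfrobSq_nonneg (A * (Q - P))]

variable [DecidableEq n]

lemma mfrobSq_mul_one_sub (A : Matrix m n ℝ) {P : Matrix n n ℝ} (hP : IsStarProjection P) :
    mfrobSq (A * (1 - P)) = mfrobSq A - mfrobSq (A * P) := by
  have h := mfrobSq_mul_add A hP hP.one_sub hP.mul_one_sub_self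
  rw [add_sub_cancel, Matrix.mul_one] at h
  linarith

/-- The projection onto the orthogonal complement of the columns of `K` dominates `W Wᵀ`. -/
lemma mfrobSq_mul_le_mfrobSq_mul_one_sub (A : Matrix m n ℝ) {κ κ' : Type*} [Fintype κ]
    [DecidableEq κ] [Fintype κ'] [DecidableEq κ'] {W : Matrix n κ ℝ} {K : Matrix n κ' ℝ}
    (hW : Wᵀ * W = 1) (hK : Kᵀ * K = 1) (hKW : Kᵀ * W = 0) :
    mfrobSq (A * W) ≤ mfrobSq (A * (1 - K * Kᵀ)) := by
  have hWW : mfrobSq (A * W) = mfrobSq (A * (W * Wᵀ)) := by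
    rw [mfrobSq_mul_eq_trace A (isStarProjection_mul_transpose hW), mfrobSq_eq_trace,
      transpose_mul, Matrix.mul_assoc, trace_mul_comm]
    simp only [Matrix.mul_assoc]
  rw [hWW]
  refine mfrobSq_mul_le_of_mul_eq A (isStarProjection_mul_transpose hW)
    (isStarProjection_mul_transpose hK).one_sub ?_
  have hWK : Wᵀ * K = 0 := by simpa using congrArg transpose hKW
  rw [Matrix.mul_sub, Matrix.mul_one, Matrix.mul_assoc, ← Matrix.mul_assoc Wᵀ, hWK,
    Matrix.zero_mul, Matrix.mul_zero, sub_zero]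

/-- Subadditivity of `1 - ∏ₗ Fₗ` for a family of commuting projections, in the form of a
map `F` from finsets to projections with `F s * F t = F (s ∪ t)`. -/
lemma mfrobSq_mul_one_sub_le_sum {ι : Type*} [DecidableEq ι] (A : Matrix m n ℝ)
    (F : Finset ι → Matrix n n ℝ) (hF : ∀ s, IsStarProjection (F s))
    (hF_mul : ∀ s t, F s * F t = F (s ∪ t)) (hF_empty : F ∅ = 1) (s : Finset ι) :
    mfrobSq (A * (1 - F s)) ≤ ∑ l ∈ s, mfrobSq (A * (1 - F {l})) := by
  induction s using Finset.induction_on with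
  | empty => simp [hF_empty, mfrobSq]
  | insert l s hl ih =>
    have hcomm : Commute (F {l}) (1 - F s) := by
      refine (Commute.one_right _).sub_right ?_
      rw [Commute, SemiconjBy, hF_mul, hF_mul, Finset.union_comm]
    have hsplit : 1 - F (insert l s) = (1 - F {l}) + F {l} * (1 - F s) := by
      rw [Matrix.mul_sub, Matrix.mul_one, hF_mul, ← Finset.insert_eq]
      abel
    have hproj : IsStarProjection (F {l} * (1 - F s)) := (hF {l}).mul (hF s).one_sub hcomm
    have horth : (1 - F {l}) * (F {l} * (1 - F s)) = 0 := by
      rw [← Matrix.mul_assoc, (hF {l}).one_sub_mul_self, Matrix.zero_mul]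
    have hle : mfrobSq (A * (F {l} * (1 - F s))) ≤ mfrobSq (A * (1 - F s)) :=
      mfrobSq_mul_le_of_mul_eq A hproj (hF s).one_sub
        (by rw [Matrix.mul_assoc, (hF s).one_sub.isIdempotentElem.eq])
    rw [hsplit, mfrobSq_mul_add A (hF {l}).one_sub hproj horth, Finset.sum_insert hl]
    linarith

end Projection

section Kronecker

variable {ι : Type*} [Fintype ι]

lemma kron_transpose {m n : ι → ℕ} (V : ∀ l, Matrix (Fin (m l)) (Fin (n l)) ℝ) :
    (kron V)ᵀ = kron fun l => (V l)ᵀ := rfl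

lemma kron_one {m : ι → ℕ} : kron (fun l => (1 : Matrix (Fin (m l)) (Fin (m l)) ℝ)) = 1 := by
  ext i j
  by_cases h : i = j
  · subst h
    simp [kron]
  · obtain ⟨l, hl⟩ := Function.ne_iff.mp h
    rw [one_apply_ne h]
    exact Finset.prod_eq_zero (Finset.mem_univ l) (one_apply_ne hl)

variable [DecidableEq ι]

lemma kron_mul {m n q : ι → ℕ} (A : ∀ l, Matrix (Fin (m l)) (Fin (n l)) ℝ)
    (B : ∀ l, Matrix (Fin (n l)) (Fin (q l)) ℝ) :
    kron A * kron B = kron fun l => A l * B l := by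
  ext i j
  simp only [kron, mul_apply, ← Finset.prod_mul_distrib]
  rw [Finset.prod_univ_sum, Fintype.piFinset_univ]

def kronOn {n : ι → ℕ} (Q : ∀ l, Matrix (Fin (n l)) (Fin (n l)) ℝ) (s : Finset ι) :
    Matrix (∀ l, Fin (n l)) (∀ l, Fin (n l)) ℝ :=
  kron fun l => if l ∈ s then Q l else 1

variable {n : ι → ℕ} {Q : ∀ l, Matrix (Fin (n l)) (Fin (n l)) ℝ}

lemma kronOn_mul (hQ : ∀ l, Q l * Q l = Q l) (s t : Finset ι) :
    kronOn Q s * kronOn Q t = kronOn Q (s ∪ t) := by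
  rw [kronOn, kronOn, kronOn, kron_mul]
  congr! 2 with l
  by_cases hs : l ∈ s <;> by_cases ht : l ∈ t <;> simp [hs, ht, hQ]

lemma isStarProjection_kronOn (hQ : ∀ l, IsStarProjection (Q l)) (s : Finset ι) :
    IsStarProjection (kronOn Q s) := by
  have hQ' l := isStarProjection_iff_transpose.mp (hQ l)
  refine isStarProjection_iff_transpose.mpr ⟨?_, ?_⟩
  · rw [kronOn_mul (fun l => (hQ' l).1), Finset.union_self]
  · rw [kronOn, kron_transpose]
    congr! 2 with l
    split_ifs <;> simp [hQ' l]

lemma kronOn_empty : kronOn Q ∅ = 1 := by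
  simp only [kronOn, Finset.notMem_empty, if_false]
  exact kron_one

lemma kronOn_univ : kronOn Q Finset.univ = kron Q := by
  simp [kronOn]

lemma sum_mul_kronOn_singleton (l : ι) (g : (∀ m, Fin (n m)) → ℝ) (j : ∀ m, Fin (n m)) :
    ∑ j', g j' * kronOn Q {l} j' j = ∑ a, g (update j l a) * Q l a (j l) := by
  symm
  refine Fintype.sum_of_injective (update j l) (update_injective j l) _ _ (fun j' hj' => ?_)
    (fun a => ?_)
  · obtain ⟨m, hml, hm⟩ : ∃ m, m ≠ l ∧ j' m ≠ j m := by
      by_contra! h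
      refine hj' ⟨j' l, funext fun m => ?_⟩
      by_cases hml : m = l
      · subst hml
        simp
      · simp [hml, h m hml]
    rw [kronOn, kron, Finset.prod_eq_zero (Finset.mem_univ m) (by simp [hml, one_apply_ne hm]),
      mul_zero]
  · rw [kronOn, kron, Finset.prod_eq_single l (fun m _ hml => by
      rw [if_neg (by simpa using hml), update_of_ne hml, one_apply_eq]) (by simp)]
    simp

end Kronecker

section Tensor

variable {d : ℕ} {p : Fin d → ℕ}

def modeEquiv (p : Fin d → ℕ) (k : Fin d) :
    (Fin (p k) × ∀ l : {l : Fin d // l ≠ k}, Fin (p l.1)) ≃ TIdx p where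
  toFun x := mergeIdx p k x.1 x.2
  invFun i := (i k, fun l => i l.1)
  left_inv x := by
    refine Prod.ext ?_ (funext fun l => ?_)
    · simp [mergeIdx]
    · simp [mergeIdx, l.2]
  right_inv i := by
    funext l
    simp only [mergeIdx]
    split
    · rename_i h
      subst h
      rfl
    · rfl

lemma tfrobSq_eq_mfrobSq_matricize (k : Fin d) (X : TIdx p → ℝ) :
    tfrobSq X = mfrobSq (matricize k X) := by
  rw [tfrobSq, mfrobSq, ← Equiv.sum_comp (modeEquiv p k), Fintype.sum_prod_type]
  rfl

@[simp]
lemma mergeIdx_self (k : Fin d) (i : Fin (p k)) (j : ∀ l : {l : Fin d // l ≠ k}, Fin (p l.1)) :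
    mergeIdx p k i j k = i := by
  simp [mergeIdx]

@[simp]
lemma mergeIdx_of_ne (k : Fin d) (i : Fin (p k)) (j : ∀ l : {l : Fin d // l ≠ k}, Fin (p l.1))
    (l : {l : Fin d // l ≠ k}) : mergeIdx p k i j l.1 = j l := by
  simp [mergeIdx, l.2]

lemma update_mergeIdx (k : Fin d) (i a : Fin (p k))
    (j : ∀ l : {l : Fin d // l ≠ k}, Fin (p l.1)) :
    update (mergeIdx p k i j) k a = mergeIdx p k a j := by
  funext m
  by_cases hm : m = k
  · subst hm
    simp
  · simp [mergeIdx, hm]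

lemma mergeIdx_update (k : Fin d) (i : Fin (p k))
    (j : ∀ l : {l : Fin d // l ≠ k}, Fin (p l.1)) (l : {l : Fin d // l ≠ k}) (a : Fin (p l.1)) :
    mergeIdx p k i (update j l a) = update (mergeIdx p k i j) l.1 a := by
  funext m
  by_cases hm : m = l.1
  · subst hm
    simp
  · simp only [mergeIdx, update_of_ne hm]
    split
    · rfl
    · exact update_of_ne (fun h => hm (congrArg Subtype.val h)) _ _

/-- The mode-`l` product `X ×ₗ B`. -/
def modeProd (l : Fin d) (B : Matrix (Fin (p l)) (Fin (p l)) ℝ) (X : TIdx p → ℝ) :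
    TIdx p → ℝ :=
  fun ξ => ∑ a, B (ξ l) a * X (update ξ l a)

lemma matricize_modeProd (l : Fin d) (B : Matrix (Fin (p l)) (Fin (p l)) ℝ)
    (X : TIdx p → ℝ) : matricize l (modeProd l B X) = B * matricize l X := by
  ext i j
  simp only [matricize, modeProd, mul_apply, mergeIdx_self, update_mergeIdx]

lemma matricize_mul_kronOn_singleton {k : Fin d} (X : TIdx p → ℝ)
    (Q : ∀ l : {l : Fin d // l ≠ k}, Matrix (Fin (p l.1)) (Fin (p l.1)) ℝ)
    (l : {l : Fin d // l ≠ k}) :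
    matricize k X * kronOn Q {l} = matricize k (modeProd l.1 (Q l)ᵀ X) := by
  ext i j
  rw [mul_apply, sum_mul_kronOn_singleton]
  simp only [matricize, modeProd, mergeIdx_of_ne, mergeIdx_update, transpose_apply, mul_comm]

/-- Both sides are the squared norm of the tensor `X ×ₗ Uₗ Uₗᵀ`. -/
lemma mfrobSq_matricize_mul_kronOn_singleton {k : Fin d} (X : TIdx p → ℝ) {r : Fin d → ℕ}
    {U : ∀ l : {l : Fin d // l ≠ k}, Matrix (Fin (p l.1)) (Fin (r l.1)) ℝ}
    (l : {l : Fin d // l ≠ k}) (hU : (U l)ᵀ * U l = 1) :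
    mfrobSq (matricize k X * kronOn (fun l => U l * (U l)ᵀ) {l}) =
      mfrobSq ((U l)ᵀ * matricize l.1 X) := by
  rw [matricize_mul_kronOn_singleton, ← tfrobSq_eq_mfrobSq_matricize,
    tfrobSq_eq_mfrobSq_matricize l.1, matricize_modeProd, transpose_mul, transpose_transpose,
    Matrix.mul_assoc, mfrobSq_mul_of_transpose_mul_self hU]

end Tensor

theorem matricization_projection_residual_bound_general {d : ℕ}
    (k₀ : Fin d)
    {p r : Fin d → ℕ} (X : TIdx p → ℝ)
    (U : ∀ l : {l : Fin d // l ≠ k₀}, Matrix (Fin (p l.1)) (Fin (r l.1)) ℝ)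
    (hU : ∀ l, (U l)ᵀ * U l = 1)
    (κ : Type) [Fintype κ] [DecidableEq κ]
    (W : Matrix (∀ l : {l : Fin d // l ≠ k₀}, Fin (p l.1)) κ ℝ)
    (hW : Wᵀ * W = 1)
    (hWo : (kron U)ᵀ * W = 0) :
    mfrobSq (matricize k₀ X * W) ≤
      ∑ l : {l : Fin d // l ≠ k₀},
        (tfrobSq X - mfrobSq ((U l)ᵀ * matricize l.1 X)) := by
  set Q := fun l => U l * (U l)ᵀ
  have hQ l : IsStarProjection (Q l) := isStarProjection_mul_transpose (hU l)
  have hK : (kron U)ᵀ * kron U = 1 := by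
    rw [kron_transpose, kron_mul, funext hU, kron_one]
  have hKK : kron U * (kron U)ᵀ = kronOn Q Finset.univ := by
    rw [kronOn_univ, kron_transpose, kron_mul]
  calc mfrobSq (matricize k₀ X * W)
      ≤ mfrobSq (matricize k₀ X * (1 - kronOn Q Finset.univ)) := by
        rw [← hKK]
        exact mfrobSq_mul_le_mfrobSq_mul_one_sub _ hW hK hWo
    _ ≤ ∑ l, mfrobSq (matricize k₀ X * (1 - kronOn Q {l})) :=
        mfrobSq_mul_one_sub_le_sum _ _ (isStarProjection_kronOn hQ)
          (kronOn_mul fun l => (hQ l).isIdempotentElem.eq) kronOn_empty _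
    _ = _ := by
        refine Finset.sum_congr rfl fun l _ => ?_
        rw [mfrobSq_mul_one_sub _ (isStarProjection_kronOn hQ _),
          mfrobSq_matricize_mul_kronOn_singleton X l (hU l), ← tfrobSq_eq_mfrobSq_matricize]

/-- Frobenius-norm bound for the residual of a multilinear projection
(third part of Lemma 1 of Zhang–Han, 2018):
`‖M_1(X) W‖_F² ≤ Σ_{l=2}^d ‖U_{l⊥}ᵀ M_l(X)‖_F²` whenever `W` has orthonormal
columns orthogonal to those of `U_2 ⊗ ⋯ ⊗ U_d`. -/
theorem matricization_projection_residual_bound {d : ℕ} (hd : 2 ≤ d)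
    (k₀ : Fin d) (hk₀ : (k₀ : ℕ) = 0)
    {p r : Fin d → ℕ} (X : TIdx p → ℝ)
    (U : ∀ l : {l : Fin d // l ≠ k₀}, Matrix (Fin (p l.1)) (Fin (r l.1)) ℝ)
    (hU : ∀ l, (U l)ᵀ * U l = 1)
    (κ : Type) [Fintype κ] [DecidableEq κ]
    (W : Matrix (∀ l : {l : Fin d // l ≠ k₀}, Fin (p l.1)) κ ℝ)
    (hW : Wᵀ * W = 1)
    (hWo : (kron U)ᵀ * W = 0) :
    mfrobSq (matricize k₀ X * W) ≤
      ∑ l : {l : Fin d // l ≠ k₀},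
        (tfrobSq X - mfrobSq ((U l)ᵀ * matricize l.1 X)) :=
  matricization_projection_residual_bound_general k₀ X U hU κ W hW hWo

end
end

section
/- Lower bound of singular-subspace residuals by the sin-Θ distance. Let X ∈ ℝ^{m×n} and let U ∈ ℝ^{m×r} satisfy UᵀU = I_r and U Uᵀ X = X (so the column space of X is contained in that of U). Suppose λ ≥ 0 satisfies ‖Xᵀ U w‖_2 ≥ λ ‖w‖_2 for every w ∈ ℝ^r (i.e. the r-th largest singular value of X is at least λ). Then for every Û ∈ ℝ^{m×r} with ÛᵀÛ = I_r and every Û_⊥ ∈ ℝ^{m×(m−r)} with Û_⊥ᵀÛ_⊥ = I_{m−r} and ÛᵀÛ_⊥ = 0, one has ‖Û_⊥ᵀ X‖ ≥ λ ‖Û_⊥ᵀ U‖ and ‖Û_⊥ᵀ X‖_F ≥ λ ‖Û_⊥ᵀ U‖_F. (Here ‖Û_⊥ᵀ U‖ and ‖Û_⊥ᵀ U‖_F are the spectral and Frobenius sin-Θ distances between the column spaces of Û and U.) -/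
open Matrix BigOperators

noncomputable section

/-- Euclidean norm of a vector. -/
def vnorm {ι : Type*} [Fintype ι] (v : ι → ℝ) : ℝ := Real.sqrt (∑ i, v i ^ 2)

/-- Spectral norm (ℓ₂→ℓ₂ operator norm) of a matrix. -/
def specNorm {ι κ : Type*} [Fintype ι] [Fintype κ] (A : Matrix ι κ ℝ) : ℝ :=
  sSup {x | ∃ v : κ → ℝ, vnorm v ≤ 1 ∧ x = vnorm (A.mulVec v)}

/-- Frobenius norm of a matrix. -/
def mfrob {ι κ : Type*} [Fintype ι] [Fintype κ] (A : Matrix ι κ ℝ) : ℝ :=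
  Real.sqrt (mfrobSq A)

/-!
Since the columns of `X` lie in the range of `U`, the residual factors as
`Û_⊥ᵀ X = (Û_⊥ᵀ U)(Uᵀ X) = B Mᵀ` with `B = Û_⊥ᵀ U` and `M = Xᵀ U`, and the hypothesis on `λ`
says that `M` is bounded below: `‖M w‖ ≥ λ ‖w‖`. Every row of `B Mᵀ` is `M` applied to the
corresponding row of `B`, which gives the Frobenius bound row by row; for the spectral bound,
transpose and use `‖M Bᵀ z‖ ≥ λ ‖Bᵀ z‖`.
-/

open scoped Matrix.Norms.L2Operator

variable {ι κ μ : Type*} [Fintype ι] [Fintype κ] [Fintype μ]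

lemma vnorm_eq_norm_toLp (v : ι → ℝ) : vnorm v = ‖WithLp.toLp 2 v‖ := by
  simp [vnorm, EuclideanSpace.norm_eq]

lemma vnorm_sq (v : ι → ℝ) : vnorm v ^ 2 = ∑ i, v i ^ 2 :=
  Real.sq_sqrt (Finset.sum_nonneg fun _ _ => sq_nonneg _)

lemma specNorm_eq_l2_opNorm [DecidableEq κ] (A : Matrix ι κ ℝ) : specNorm A = ‖A‖ := by
  rw [l2_opNorm_def, ← ContinuousLinearMap.sSup_unitClosedBall_eq_norm, specNorm]
  congr 1
  ext x
  constructor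
  · rintro ⟨v, hv, rfl⟩
    exact ⟨WithLp.toLp 2 v, by simpa [vnorm_eq_norm_toLp] using hv, by simp [vnorm_eq_norm_toLp]⟩
  · rintro ⟨y, hy, rfl⟩
    exact ⟨WithLp.ofLp y, by simpa [vnorm_eq_norm_toLp] using hy, by rw [vnorm_eq_norm_toLp]; rfl⟩

lemma specNorm_nonneg (A : Matrix ι κ ℝ) : 0 ≤ specNorm A := by
  classical
  exact specNorm_eq_l2_opNorm A ▸ norm_nonneg _

lemma specNorm_transpose (A : Matrix ι κ ℝ) : specNorm Aᵀ = specNorm A := by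
  classical
  rw [specNorm_eq_l2_opNorm, specNorm_eq_l2_opNorm, ← conjTranspose_eq_transpose_of_trivial,
    l2_opNorm_conjTranspose]

lemma vnorm_mulVec_le (A : Matrix ι κ ℝ) (v : κ → ℝ) :
    vnorm (A *ᵥ v) ≤ specNorm A * vnorm v := by
  classical
  simpa [specNorm_eq_l2_opNorm, vnorm_eq_norm_toLp] using A.l2_opNorm_mulVec (WithLp.toLp 2 v)

lemma specNorm_le_of_forall {A : Matrix ι κ ℝ} {C : ℝ} (hC : 0 ≤ C)
    (h : ∀ v, vnorm (A *ᵥ v) ≤ C * vnorm v) : specNorm A ≤ C := by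
  classical
  rw [specNorm_eq_l2_opNorm, l2_opNorm_def]
  refine ContinuousLinearMap.opNorm_le_bound _ hC fun x => ?_
  show ‖WithLp.toLp 2 (A *ᵥ x.ofLp)‖ ≤ C * ‖x‖
  simpa [vnorm_eq_norm_toLp] using h x.ofLp

lemma mfrobSq_eq_sum_vnorm_sq (A : Matrix ι κ ℝ) : mfrobSq A = ∑ i, vnorm (A i) ^ 2 := by
  simp only [mfrobSq, vnorm_sq]

section BoundedBelow

variable {c : ℝ} {M : Matrix ι κ ℝ}

lemma mul_specNorm_le_specNorm_mul (hc : 0 ≤ c)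
    (hM : ∀ w, c * vnorm w ≤ vnorm (M *ᵥ w)) (B : Matrix κ μ ℝ) :
    c * specNorm B ≤ specNorm (M * B) := by
  rcases hc.eq_or_lt with rfl | hc
  · simpa using specNorm_nonneg (M * B)
  rw [mul_comm, ← le_div_iff₀ hc]
  refine specNorm_le_of_forall (div_nonneg (specNorm_nonneg _) hc.le) fun v => ?_
  rw [div_mul_eq_mul_div, le_div_iff₀ hc, mul_comm]
  calc c * vnorm (B *ᵥ v) ≤ vnorm (M *ᵥ B *ᵥ v) := hM _
    _ = vnorm ((M * B) *ᵥ v) := by rw [mulVec_mulVec]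
    _ ≤ specNorm (M * B) * vnorm v := vnorm_mulVec_le _ _

lemma mul_specNorm_le_specNorm_mul_transpose (hc : 0 ≤ c)
    (hM : ∀ w, c * vnorm w ≤ vnorm (M *ᵥ w)) (B : Matrix μ κ ℝ) :
    c * specNorm B ≤ specNorm (B * Mᵀ) := by
  rw [← specNorm_transpose B, ← specNorm_transpose (B * Mᵀ), transpose_mul, transpose_transpose]
  exact mul_specNorm_le_specNorm_mul hc hM Bᵀ

lemma mul_mfrob_le_mfrob_mul_transpose (hc : 0 ≤ c)
    (hM : ∀ w, c * vnorm w ≤ vnorm (M *ᵥ w)) (B : Matrix μ κ ℝ) :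
    c * mfrob B ≤ mfrob (B * Mᵀ) := by
  have hrow (i : μ) : (B * Mᵀ) i = M *ᵥ B i := by
    rw [mul_apply_eq_vecMul, vecMul_transpose]
  have hsq : c ^ 2 * mfrobSq B ≤ mfrobSq (B * Mᵀ) := by
    simp only [mfrobSq_eq_sum_vnorm_sq, hrow, Finset.mul_sum, ← mul_pow]
    gcongr with i
    · exact mul_nonneg hc (Real.sqrt_nonneg _)
    · exact hM (B i)
  calc c * mfrob B = √(c ^ 2 * mfrobSq B) := by
        rw [mfrob, Real.sqrt_mul (sq_nonneg c), Real.sqrt_sq hc]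
    _ ≤ mfrob (B * Mᵀ) := Real.sqrt_le_sqrt hsq

end BoundedBelow

theorem residual_lower_bound_sin_theta_general
    (m n r : ℕ) (X : Matrix (Fin m) (Fin n) ℝ) (U : Matrix (Fin m) (Fin r) ℝ)
    (hUX : U * Uᵀ * X = X)
    (lam : ℝ) (hlam : 0 ≤ lam)
    (hsv : ∀ w : Fin r → ℝ, lam * vnorm w ≤ vnorm (Xᵀ.mulVec (U.mulVec w)))
    (Uhatperp : Matrix (Fin m) (Fin (m - r)) ℝ) :
    lam * specNorm (Uhatperpᵀ * U) ≤ specNorm (Uhatperpᵀ * X) ∧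
    lam * mfrob (Uhatperpᵀ * U) ≤ mfrob (Uhatperpᵀ * X) := by
  have hXU (w : Fin r → ℝ) : lam * vnorm w ≤ vnorm ((Xᵀ * U) *ᵥ w) := by
    rw [← mulVec_mulVec]
    exact hsv w
  have hres : Uhatperpᵀ * X = (Uhatperpᵀ * U) * (Xᵀ * U)ᵀ := by
    rw [transpose_mul, transpose_transpose, Matrix.mul_assoc, ← Matrix.mul_assoc U, hUX]
  rw [hres]
  exact ⟨mul_specNorm_le_specNorm_mul_transpose hlam hXU _,
    mul_mfrob_le_mfrob_mul_transpose hlam hXU _⟩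

/-- Lower bound of singular-subspace residuals by the sin-Θ distance
(second part of Lemma 2 of Zhang–Han, 2018):
`‖Û_⊥ᵀ X‖ ≥ σ_r(X) ‖sin Θ(Û,U)‖` in both the spectral and Frobenius norms. -/
theorem residual_lower_bound_sin_theta
    (m n r : ℕ) (X : Matrix (Fin m) (Fin n) ℝ) (U : Matrix (Fin m) (Fin r) ℝ)
    (hU : Uᵀ * U = 1) (hUX : U * Uᵀ * X = X)
    (lam : ℝ) (hlam : 0 ≤ lam)
    (hsv : ∀ w : Fin r → ℝ, lam * vnorm w ≤ vnorm (Xᵀ.mulVec (U.mulVec w)))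
    (Uhat : Matrix (Fin m) (Fin r) ℝ) (Uhatperp : Matrix (Fin m) (Fin (m - r)) ℝ)
    (hUhat : Uhatᵀ * Uhat = 1) (hUhatperp : Uhatperpᵀ * Uhatperp = 1)
    (hUhato : Uhatᵀ * Uhatperp = 0) :
    lam * specNorm (Uhatperpᵀ * U) ≤ specNorm (Uhatperpᵀ * X) ∧
    lam * mfrob (Uhatperpᵀ * U) ≤ mfrob (Uhatperpᵀ * X) :=
  residual_lower_bound_sin_theta_general m n r X U hUX lam hlam hsv Uhatperp

end
end

section
/- Existence of a row-incoherent orthonormal matrix. Let r ≥ 1 and s be integers with s ≥ 3r. Then there exists a matrix V* ∈ ℝ^{(s−r)×r} with (V*)ᵀV* = I_r such that every row of V* satisfies r/s ≤ ‖V*_{[k,:]}‖_2² ≤ r/(s−2r) for all k = 1,…,s−r, where V*_{[k,:]} denotes the k-th row and ‖·‖_2 the Euclidean norm. -/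
/-!
Split the `s - r` rows into the `r` residue classes mod `r` and let column `j` be the
normalized indicator of the `j`-th class. The columns have disjoint supports, hence are
orthonormal, and a row in a class of size `c` has squared norm `1 / c`. Each class has
`⌊(s - r) / r⌋` or `⌈(s - r) / r⌉` elements, which puts `1 / c` between `r / s` and
`r / (s - 2r)`.
-/

open Matrix BigOperators Finset

noncomputable section

section FiberIndicator

variable {ι κ : Type*} [Fintype ι] [DecidableEq κ]

def fiberIndicatorMatrix (f : ι → κ) : Matrix ι κ ℝ :=
  fun i j => if f i = j then (√(#{i' | f i' = j} : ℝ))⁻¹ else 0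

lemma fiberIndicatorMatrix_mul_apply (f : ι → κ) (i : ι) (j j' : κ) :
    fiberIndicatorMatrix f i j * fiberIndicatorMatrix f i j' =
      if j = j' ∧ f i = j then (#{i' | f i' = j} : ℝ)⁻¹ else 0 := by
  unfold fiberIndicatorMatrix
  by_cases hj : f i = j
  · subst hj
    by_cases hj' : f i = j'
    · subst hj'
      simp [← Real.sqrt_inv]
    · simp [hj']
  · simp [hj]

theorem fiberIndicatorMatrix_transpose_mul_self {f : ι → κ} (hf : Function.Surjective f) :
    (fiberIndicatorMatrix f)ᵀ * fiberIndicatorMatrix f = 1 := by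
  ext j j'
  simp only [mul_apply, transpose_apply, fiberIndicatorMatrix_mul_apply]
  obtain ⟨i, rfl⟩ := hf j
  rw [← sum_filter]
  by_cases h : f i = j'
  · subst h
    have hfiber : #{i' | f i' = f i} ≠ 0 := card_ne_zero.2 ⟨i, by simp⟩
    simp [hfiber]
  · simp [h]

theorem sum_fiberIndicatorMatrix_sq [Fintype κ] (f : ι → κ) (i : ι) :
    ∑ j, fiberIndicatorMatrix f i j ^ 2 = (#{i' | f i' = f i} : ℝ)⁻¹ := by
  simp [sq, fiberIndicatorMatrix_mul_apply]

end FiberIndicator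

section ResidueClasses

variable {m r : ℕ} [NeZero r]

theorem surjective_ofNat_val (h : r ≤ m) : Function.Surjective fun k : Fin m => Fin.ofNat r k :=
  fun j => ⟨⟨j, by omega⟩, by simp⟩

theorem card_filter_ofNat_val_eq (j : Fin r) :
    #{k : Fin m | Fin.ofNat r k = j} = m / r + if (j : ℕ) < m % r then 1 else 0 := by
  have hcount := Nat.count_modEq_card m (Nat.pos_of_neZero r) j
  rw [Nat.mod_eq_of_lt j.isLt, Nat.count_eq_card_filter_range, ← Nat.Iio_eq_range,
    ← Fin.map_valEmbedding_univ, filter_map, card_map] at hcount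
  rw [← hcount]
  congr 1
  ext k
  simp [Fin.ext_iff, Nat.ModEq, Nat.mod_eq_of_lt j.isLt]

theorem mul_card_filter_ofNat_val_bounds (j : Fin r) :
    m < r * #{k : Fin m | Fin.ofNat r k = j} + r ∧
      r * #{k : Fin m | Fin.ofNat r k = j} ≤ m + r := by
  have hdiv := Nat.div_add_mod m r
  have hmod := Nat.mod_lt m (Nat.pos_of_neZero r)
  rw [card_filter_ofNat_val_eq]
  split_ifs <;> constructor <;> simp only [mul_add, mul_one, mul_zero] <;> omega

end ResidueClasses

theorem inv_natCast_mem_Icc_of_mul_bounds {r s c : ℕ} (hs : 2 * r < s)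
    (hlower : s ≤ r * c + 2 * r) (hupper : r * c ≤ s) :
    (c : ℝ)⁻¹ ∈ Set.Icc ((r : ℝ) / s) ((r : ℝ) / (s - 2 * r)) := by
  have hc0 : (0 : ℝ) < c := by exact_mod_cast Nat.pos_of_mul_pos_left (by omega : 0 < r * c)
  have hlower' : (s : ℝ) - 2 * r ≤ r * c := by
    rw [sub_le_iff_le_add]
    exact_mod_cast hlower
  have hupper' : (r : ℝ) * c ≤ s := by exact_mod_cast hupper
  have hgap : (0 : ℝ) < s - 2 * r := by
    rw [sub_pos]
    exact_mod_cast hs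
  constructor
  · rw [div_le_iff₀ (by linarith), ← div_eq_inv_mul, le_div_iff₀ hc0]
    exact hupper'
  · rw [le_div_iff₀ hgap, inv_mul_eq_div, div_le_iff₀ hc0]
    exact hlower'

/-- Existence of a row-incoherent orthonormal matrix: for `s ≥ 3r` there is an
orthonormal `V* ∈ ℝ^{(s−r)×r}` all of whose rows have squared norm between
`r/s` and `r/(s−2r)`. -/
theorem exists_row_incoherent_orthonormal (r s : ℕ) (hr : 1 ≤ r) (hs : 3 * r ≤ s) :
    ∃ V : Matrix (Fin (s - r)) (Fin r) ℝ,
      Vᵀ * V = 1 ∧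
      ∀ k : Fin (s - r),
        (r : ℝ) / (s : ℝ) ≤ ∑ j, V k j ^ 2 ∧
        ∑ j, V k j ^ 2 ≤ (r : ℝ) / ((s : ℝ) - 2 * (r : ℝ)) := by
  have : NeZero r := ⟨by omega⟩
  refine ⟨fiberIndicatorMatrix fun k : Fin (s - r) => Fin.ofNat r k,
    fiberIndicatorMatrix_transpose_mul_self (surjective_ofNat_val (by omega)), fun k => ?_⟩
  rw [sum_fiberIndicatorMatrix_sq]
  obtain ⟨hlower, hupper⟩ := mul_card_filter_ofNat_val_bounds (m := s - r) (Fin.ofNat r k)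
  exact inv_natCast_mem_Icc_of_mul_bounds (by omega) (by omega) (by omega)

end
end

section
/- Tail bound on the overlap of two random subsets (hypergeometric tail). Let s' and p' be positive integers with p' ≥ 2s'. Then Σ_{t : t integer, s'/2 ≤ t ≤ s'} C(s',t) · C(p'−s', s'−t) ≤ (1/2) · (4s'/(p'−s'+1))^{s'/2} · C(p',s'), where C(n,k) denotes the binomial coefficient n choose k. Equivalently, if Ω' is a uniformly random s'-element subset of {1,…,p'} and Ω is a fixed s'-element subset, then P(|Ω ∩ Ω'| ≥ s'/2) ≤ (1/2)(4s'/(p'−s'+1))^{s'/2}. -/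
open BigOperators

noncomputable section

/-! Union bound over the `t`-subsets of the fixed set `Ω`, with `t = ⌈s'/2⌉`: the probability that
a given `t`-set lies in `Ω'` is `C(p'-t, s'-t) / C(p', s') = C(s',t) / C(p',t) ≤ (s'/p')^t`, so
`P(|Ω ∩ Ω'| ≥ t) ≤ C(s',t) (s'/p')^t`. Finally `C(s',t) ≤ 2^(s'-1) = (1/2) 4^(s'/2)` and
`(s'/p')^t ≤ (s'/p')^(s'/2) ≤ (s'/(p'-s'+1))^(s'/2)`. -/

open Finset

namespace Nat

theorem sum_Ico_choose_mul_choose_le (a b t : ℕ) (ht : t ≤ a) :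
    ∑ u ∈ Ico t (a + 1), a.choose u * b.choose (a - u) ≤
      a.choose t * (a + b - t).choose (a - t) :=
  -- weight each term by `u.choose t ≥ 1`; the weighted sum is a Vandermonde convolution
  calc ∑ u ∈ Ico t (a + 1), a.choose u * b.choose (a - u)
      ≤ ∑ u ∈ Ico t (a + 1), a.choose u * u.choose t * b.choose (a - u) := by
        gcongr with u hu
        exact Nat.le_mul_of_pos_right _ (choose_pos (mem_Ico.mp hu).1)
    _ = a.choose t * ∑ v ∈ range (a - t + 1), (a - t).choose v * b.choose (a - t - v) := by
        rw [sum_Ico_eq_sum_range, mul_sum, show a + 1 - t = a - t + 1 by omega]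
        refine sum_congr rfl fun v _ => ?_
        rw [choose_mul (le_add_right t v), Nat.add_sub_cancel_left, Nat.sub_sub, add_comm t v]
        ring
    _ = a.choose t * (a + b - t).choose (a - t) := by
        rw [show a + b - t = a - t + b by omega, add_choose_eq,
          Finset.Nat.sum_antidiagonal_eq_sum_range_succ_mk]

theorem descFactorial_mul_pow_le {s n : ℕ} (hsn : s ≤ n) (t : ℕ) :
    s.descFactorial t * n ^ t ≤ n.descFactorial t * s ^ t := by
  induction t with
  | zero => simp
  | succ t ih =>
    have hstep : (s - t) * n ≤ (n - t) * s := by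
      rw [Nat.sub_mul, Nat.sub_mul, mul_comm s n]
      exact Nat.sub_le_sub_left (Nat.mul_le_mul_left t hsn) _
    calc s.descFactorial (t + 1) * n ^ (t + 1)
        = ((s - t) * n) * (s.descFactorial t * n ^ t) := by rw [descFactorial_succ]; ring
      _ ≤ ((n - t) * s) * (n.descFactorial t * s ^ t) := Nat.mul_le_mul hstep ih
      _ = n.descFactorial (t + 1) * s ^ (t + 1) := by rw [descFactorial_succ]; ring

theorem choose_mul_pow_le {s n : ℕ} (hsn : s ≤ n) (t : ℕ) :
    s.choose t * n ^ t ≤ n.choose t * s ^ t := by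
  have h := descFactorial_mul_pow_le hsn t
  rw [descFactorial_eq_factorial_mul_choose, descFactorial_eq_factorial_mul_choose,
    mul_assoc, mul_assoc] at h
  exact Nat.le_of_mul_le_mul_left h (factorial_pos t)

theorem choose_sub_mul_pow_le {t s n : ℕ} (hts : t ≤ s) (hsn : s ≤ n) :
    (n - t).choose (s - t) * n ^ t ≤ n.choose s * s ^ t := by
  have hpos : 0 < n.choose t := choose_pos (hts.trans hsn)
  refine Nat.le_of_mul_le_mul_left ?_ hpos
  calc n.choose t * ((n - t).choose (s - t) * n ^ t)
      = n.choose s * (s.choose t * n ^ t) := by rw [← mul_assoc, ← choose_mul hts]; ring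
    _ ≤ n.choose s * (n.choose t * s ^ t) := Nat.mul_le_mul_left _ (choose_mul_pow_le hsn t)
    _ = n.choose t * (n.choose s * s ^ t) := by ring

end Nat

theorem sum_Ico_choose_mul_choose_le_choose_mul_pow {t s n : ℕ} (hts : t ≤ s) (hsn : s ≤ n)
    (hn : 0 < n) :
    ∑ u ∈ Ico t (s + 1), (s.choose u : ℝ) * ((n - s).choose (s - u) : ℝ) ≤
      s.choose t * ((s : ℝ) / n) ^ t * n.choose s := by
  have hunion := Nat.sum_Ico_choose_mul_choose_le s (n - s) t hts
  rw [show s + (n - s) - t = n - t by omega] at hunion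
  have hsub : ((n - t).choose (s - t) : ℝ) ≤ ((s : ℝ) / n) ^ t * n.choose s := by
    rw [div_pow, div_mul_eq_mul_div, le_div_iff₀ (by positivity), mul_comm _ (n.choose s : ℝ)]
    exact_mod_cast Nat.choose_sub_mul_pow_le hts hsn
  calc _ ≤ (s.choose t : ℝ) * (n - t).choose (s - t) := by exact_mod_cast hunion
    _ ≤ (s.choose t : ℝ) * (((s : ℝ) / n) ^ t * n.choose s) := by gcongr
    _ = _ := by ring

theorem choose_ceil_half_mul_pow_le {s : ℕ} (hs : 0 < s) {y : ℝ} (hy0 : 0 ≤ y) (hy1 : y ≤ 1) :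
    (s.choose ((s + 1) / 2) : ℝ) * y ^ ((s + 1) / 2) ≤ 1 / 2 * (4 * y) ^ ((s : ℝ) / 2) := by
  obtain ⟨r, rfl⟩ : ∃ r, s = r + 1 := ⟨s - 1, by omega⟩
  have hchoose : ((r + 1).choose ((r + 2) / 2) : ℝ) ≤ 2 ^ r := by
    exact_mod_cast Nat.choose_succ_le_two_pow r _
  have hpow : y ^ ((r + 2) / 2) ≤ y ^ (((r + 1 : ℕ) : ℝ) / 2) := by
    rw [← Real.rpow_natCast]
    refine Real.rpow_le_rpow_of_exponent_ge' hy0 hy1 (by positivity) ?_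
    rw [div_le_iff₀ two_pos]
    exact_mod_cast (by omega : r + 1 ≤ (r + 2) / 2 * 2)
  have hfour : (4 : ℝ) ^ (((r + 1 : ℕ) : ℝ) / 2) = 2 * 2 ^ r := by
    rw [show (4 : ℝ) = 2 ^ (2 : ℝ) by norm_num, ← Real.rpow_mul two_pos.le,
      mul_div_cancel₀ _ two_ne_zero, Real.rpow_natCast, pow_succ]
    ring
  rw [Real.mul_rpow (by norm_num) hy0, hfour, show (r + 1 + 1) / 2 = (r + 2) / 2 by omega]
  calc ((r + 1).choose ((r + 2) / 2) : ℝ) * y ^ ((r + 2) / 2)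
      ≤ 2 ^ r * y ^ (((r + 1 : ℕ) : ℝ) / 2) := by gcongr
    _ = 1 / 2 * (2 * 2 ^ r * y ^ (((r + 1 : ℕ) : ℝ) / 2)) := by ring

theorem hypergeometric_overlap_tail_bound_general (s' p' : ℕ) (hs : 0 < s')
    (hps : 2 * s' ≤ p') :
    ∑ t ∈ (Finset.range (s' + 1)).filter (fun t => s' ≤ 2 * t),
        ((s'.choose t : ℝ) * ((p' - s').choose (s' - t) : ℝ)) ≤
      (1 / 2) * ((4 * (s' : ℝ)) / ((p' : ℝ) - (s' : ℝ) + 1)) ^ ((s' : ℝ) / 2) *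
        (p'.choose s' : ℝ) := by
  have hsp : s' ≤ p' := by omega
  have hp : (0 : ℝ) < p' := by exact_mod_cast (by omega : 0 < p')
  have hs1 : (1 : ℝ) ≤ s' := by exact_mod_cast hs
  have hspR : (s' : ℝ) ≤ p' := by exact_mod_cast hsp
  have hrange : (range (s' + 1)).filter (fun t => s' ≤ 2 * t) = Ico ((s' + 1) / 2) (s' + 1) := by
    ext t
    simp only [mem_filter, mem_range, mem_Ico]
    omega
  have hdenom : 4 * (s' : ℝ) / p' ≤ 4 * (s' : ℝ) / ((p' : ℝ) - s' + 1) := by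
    gcongr
    linarith
  rw [hrange]
  calc _ ≤ (s'.choose ((s' + 1) / 2) : ℝ) * ((s' : ℝ) / p') ^ ((s' + 1) / 2) * p'.choose s' :=
        sum_Ico_choose_mul_choose_le_choose_mul_pow (by omega) hsp (by omega)
    _ ≤ 1 / 2 * (4 * ((s' : ℝ) / p')) ^ ((s' : ℝ) / 2) * p'.choose s' := by
        refine mul_le_mul_of_nonneg_right ?_ (by positivity)
        exact choose_ceil_half_mul_pow_le hs (by positivity) ((div_le_one hp).mpr hspR)
    _ ≤ _ := by
        rw [← mul_div_assoc]
        gcongr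

/-- Tail bound on the overlap of two random subsets (hypergeometric tail):
`Σ_{s'/2 ≤ t ≤ s'} C(s',t) C(p'−s', s'−t) ≤ (1/2)(4s'/(p'−s'+1))^{s'/2} C(p',s')`. -/
theorem hypergeometric_overlap_tail_bound (s' p' : ℕ) (hs : 0 < s') (hp : 0 < p')
    (hps : 2 * s' ≤ p') :
    ∑ t ∈ (Finset.range (s' + 1)).filter (fun t => s' ≤ 2 * t),
        ((s'.choose t : ℝ) * ((p' - s').choose (s' - t) : ℝ)) ≤
      (1 / 2) * ((4 * (s' : ℝ)) / ((p' : ℝ) - (s' : ℝ) + 1)) ^ ((s' : ℝ) / 2) *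
        (p'.choose s' : ℝ) :=
  hypergeometric_overlap_tail_bound_general s' p' hs hps

end
end
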